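/- arXiv:2401.00818 — 3 statements merged into one kernel-verified Lean document; each statement's English description precedes it below -/
import Mathlib

section
/- Let (a_n), (c_n), (d_n) be sequences of natural numbers with a_0 = 1, c_0 = 0, d_0 = 0 and a_n > 0 for every n, and suppose that in the ring of formal power series ℝ[[X]] one has Σ_{n≥0} a_n X^n/n! = exp(Σ_{n≥1} c_n X^n/n!) and (Σ_{n≥0} a_n X^n/n!)·(1 − Σ_{n≥1} d_n X^n/n!) = 1. Assume the sequence (a_n/n!) is gargantuan. Then for every integer r ≥ 0, as n → ∞, c_n/a_n = 1 − Σ_{k=1}^{r} d_k·C(n,k)·a_{n−k}/a_n + O(C(n,r+1)·a_{n−r−1}/a_n), where C(n,k) is the binomial coefficient. -/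
open Filter Asymptotics Finset

/-- A real sequence `u` is *gargantuan* if `u (n-1) / u n → 0` and, for every `r ≥ 1`,
`∑_{k=r}^{n-r} |u k * u (n-k)| = O(u (n-r))` as `n → ∞`. -/
def Gargantuan (u : ℕ → ℝ) : Prop :=
  Tendsto (fun n => u (n - 1) / u n) atTop (nhds 0) ∧
    ∀ r : ℕ, 1 ≤ r →
      (fun n => ∑ k ∈ Finset.Icc r (n - r), |u k * u (n - k)|) =O[atTop]
        fun n => u (n - r)

/-- The exponential `exp C` of a formal power series `C` (intended for `C` with zero
constant term): the coefficient of `X^n` is `∑_{k=0}^{n} [X^n] (C^k) / k!`. -/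
noncomputable def expPS (C : PowerSeries ℝ) : PowerSeries ℝ :=
  PowerSeries.mk fun n =>
    ∑ k ∈ Finset.range (n + 1), (PowerSeries.coeff n (C ^ k)) / (Nat.factorial k)

lemma coeff_pow_eq_zero {C : PowerSeries ℝ} (hC : PowerSeries.constantCoeff C = 0) :
    ∀ k m : ℕ, m < k → PowerSeries.coeff m (C ^ k) = 0 := by
  intro k
  induction k with
  | zero => intro m hm; omega
  | succ k ih =>
    intro m hm
    rw [pow_succ, PowerSeries.coeff_mul]
    apply Finset.sum_eq_zero
    intro p hp
    rw [Finset.HasAntidiagonal.mem_antidiagonal] at hp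
    rcases lt_or_ge p.1 k with h | h
    · rw [ih p.1 h, zero_mul]
    · have : p.2 = 0 := by omega
      rw [this, PowerSeries.coeff_zero_eq_constantCoeff, hC, mul_zero]

lemma coeff_mul_expPS (B C : PowerSeries ℝ) (hC : PowerSeries.constantCoeff C = 0) (n : ℕ) :
    PowerSeries.coeff n (B * expPS C) =
      ∑ j ∈ Finset.range (n + 1), (PowerSeries.coeff n (B * C ^ j)) / (Nat.factorial j) := by
  rw [PowerSeries.coeff_mul]
  have h1 : ∀ p ∈ Finset.HasAntidiagonal.antidiagonal n,
      PowerSeries.coeff p.1 B * PowerSeries.coeff p.2 (expPS C) =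
      ∑ j ∈ Finset.range (n + 1),
        PowerSeries.coeff p.1 B * (PowerSeries.coeff p.2 (C ^ j) / (Nat.factorial j)) := by
    intro p hp
    rw [Finset.HasAntidiagonal.mem_antidiagonal] at hp
    rw [expPS, PowerSeries.coeff_mk, Finset.mul_sum]
    refine Finset.sum_subset (Finset.range_subset_range.2 (by omega : p.2 + 1 ≤ n + 1)) ?_
    intro j hj hj'
    simp only [Finset.mem_range] at hj hj'
    rw [coeff_pow_eq_zero hC j p.2 (by omega), zero_div, mul_zero]
  calc ∑ p ∈ Finset.HasAntidiagonal.antidiagonal n,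
        PowerSeries.coeff p.1 B * PowerSeries.coeff p.2 (expPS C)
      = ∑ p ∈ Finset.HasAntidiagonal.antidiagonal n, ∑ j ∈ Finset.range (n + 1),
          PowerSeries.coeff p.1 B * (PowerSeries.coeff p.2 (C ^ j) / (Nat.factorial j)) :=
        Finset.sum_congr rfl h1
    _ = ∑ j ∈ Finset.range (n + 1), ∑ p ∈ Finset.HasAntidiagonal.antidiagonal n,
          PowerSeries.coeff p.1 B * (PowerSeries.coeff p.2 (C ^ j) / (Nat.factorial j)) :=
        Finset.sum_comm
    _ = ∑ j ∈ Finset.range (n + 1),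
          (PowerSeries.coeff n (B * C ^ j)) / (Nat.factorial j) := by
        refine Finset.sum_congr rfl fun j _ => ?_
        rw [PowerSeries.coeff_mul, Finset.sum_div]
        exact Finset.sum_congr rfl fun p _ => by ring

lemma deriv_expPS (C : PowerSeries ℝ) (hC : PowerSeries.constantCoeff C = 0) :
    PowerSeries.derivative ℝ (expPS C) = PowerSeries.derivative ℝ C * expPS C := by
  ext n
  rw [PowerSeries.coeff_derivative, coeff_mul_expPS _ _ hC n, expPS, PowerSeries.coeff_mk,
    Finset.sum_mul]
  have key : ∀ j ∈ Finset.range (n + 1),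
      PowerSeries.coeff n (PowerSeries.derivative ℝ C * C ^ j) / (Nat.factorial j) =
      PowerSeries.coeff (n + 1) (C ^ (j + 1)) / (Nat.factorial (j + 1)) * (n + 1) := by
    intro j hj
    have hder : PowerSeries.derivative ℝ (C ^ (j + 1)) =
        (j + 1) • (C ^ j * PowerSeries.derivative ℝ C) := by
      rw [Derivation.leibniz_pow]
      simp
    have h2 : PowerSeries.coeff (n + 1) (C ^ (j + 1)) * (n + 1) =
        ((j : ℝ) + 1) * PowerSeries.coeff n (PowerSeries.derivative ℝ C * C ^ j) := by
      rw [← PowerSeries.coeff_derivative, hder, map_nsmul, mul_comm (C ^ j)]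
      push_cast [nsmul_eq_mul]
      ring
    rw [Nat.factorial_succ, div_mul_eq_mul_div, h2]
    push_cast
    rw [mul_div_mul_left _ _ (by positivity : ((j : ℝ) + 1) ≠ 0)]
  rw [Finset.sum_congr rfl key]
  rw [← Finset.sum_mul]
  congr 1
  -- ∑_{j ∈ range (n+1)} coeff (n+1) (C^(j+1)) / (j+1)! = ∑_{k ∈ range (n+2)} coeff (n+1) (C^k) / k!
  rw [Finset.sum_range_succ' (fun k => PowerSeries.coeff (n+1) (C ^ k) / (Nat.factorial k)) (n+1)]
  simp [Finset.sum_mul]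

lemma sum_Icc_reflect (f : ℕ → ℝ) (a b n : ℕ) (han : a ≤ n) (hbn : b ≤ n) :
    ∑ k ∈ Finset.Icc a b, f k = ∑ j ∈ Finset.Icc (n - b) (n - a), f (n - j) := by
  refine Finset.sum_nbij' (fun k => n - k) (fun j => n - j) ?_ ?_ ?_ ?_ ?_
  · intro k hk; simp only [Finset.mem_Icc] at *; omega
  · intro j hj; simp only [Finset.mem_Icc] at *; omega
  · intro k hk; simp only [Finset.mem_Icc] at hk; omega
  · intro j hj; simp only [Finset.mem_Icc] at hj; omega
  · intro k hk; simp only [Finset.mem_Icc] at hk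
    congr 1; omega

lemma double_sum_tri (F : ℕ → ℕ → ℝ) (s : ℕ) :
    ∑ j ∈ Finset.Icc 1 s, ∑ i ∈ Finset.range (s - j + 1), F j i =
      ∑ m ∈ Finset.Icc 1 s, ∑ j ∈ Finset.Icc 1 m, F j (m - j) := by
  rw [Finset.sum_sigma', Finset.sum_sigma']
  refine Finset.sum_nbij' (fun p => ⟨p.1 + p.2, p.1⟩) (fun q => ⟨q.2, q.1 - q.2⟩) ?_ ?_ ?_ ?_ ?_
  · rintro ⟨j, i⟩ h
    dsimp only
    simp only [Finset.mem_sigma, Finset.mem_Icc, Finset.mem_range] at *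
    omega
  · rintro ⟨m, j⟩ h
    dsimp only
    simp only [Finset.mem_sigma, Finset.mem_Icc, Finset.mem_range] at *
    omega
  · rintro ⟨j, i⟩ h
    simp only [Finset.mem_sigma, Finset.mem_Icc, Finset.mem_range] at h
    dsimp only
    simp only [Sigma.mk.inj_iff]
    exact ⟨trivial, heq_of_eq (by omega)⟩
  · rintro ⟨m, j⟩ h
    simp only [Finset.mem_sigma, Finset.mem_Icc, Finset.mem_range] at h
    dsimp only
    simp only [Sigma.mk.inj_iff]
    exact ⟨by omega, HEq.rfl⟩
  · rintro ⟨j, i⟩ h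
    simp only [Finset.mem_sigma, Finset.mem_Icc, Finset.mem_range] at h
    dsimp only
    congr 1
    omega

lemma split3 (f : ℕ → ℝ) (a b c : ℕ) (h1 : a ≤ b) (h2 : b ≤ c) :
    ∑ k ∈ Finset.Icc 1 c, f k =
      (∑ k ∈ Finset.Icc 1 a, f k) + (∑ k ∈ Finset.Icc (a+1) b, f k)
        + (∑ k ∈ Finset.Icc (b+1) c, f k) := by
  have e0 : ∀ m : ℕ, Finset.Icc 1 m = Finset.Ioc 0 m := fun m => by
    rw [← Finset.Icc_add_one_left_eq_Ioc]; rfl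
  have e1 : ∀ x y : ℕ, Finset.Icc (x+1) y = Finset.Ioc x y := fun x y => by
    rw [← Finset.Icc_add_one_left_eq_Ioc]
  rw [e0, e0, e1, e1]
  rw [Finset.sum_Ioc_consecutive f (Nat.zero_le a) h1,
    Finset.sum_Ioc_consecutive f (Nat.zero_le b) h2]

lemma expansion_step (u v g : ℕ → ℝ)
    (hu0 : u 0 = 1)
    (hupos : ∀ n, 0 < u n)
    (hv0 : ∀ n, 0 ≤ v n) (hvu : ∀ n, v n ≤ u n)
    (I1 : ∀ n, 1 ≤ n → u n = ∑ k ∈ Finset.Icc 1 n, v k * u (n - k))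
    (idG : ∀ m, 1 ≤ m → v m + ((∑ j ∈ Finset.Icc 1 m, u j * g (m - j)) + g m) = 0)
    (hg0 : g 0 = 1)
    (garg : ∀ s : ℕ, 1 ≤ s → ∃ C : ℝ, ∃ N : ℕ, ∀ n, N ≤ n →
        ∑ k ∈ Finset.Icc s (n - s), u k * u (n - k) ≤ C * u (n - s))
    (s : ℕ) (C : ℝ) (N : ℕ)
    (IH : ∀ t, t < s → ∀ n, N ≤ n →
        |v n - ∑ i ∈ Finset.range (t + 1), g i * u (n - i)| ≤ C * u (n - (t + 1))) :
    ∃ C' : ℝ, ∃ N' : ℕ, ∀ n, N' ≤ n →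
        |v n - ∑ i ∈ Finset.range (s + 1), g i * u (n - i)| ≤ C' * u (n - (s + 1)) := by
  obtain ⟨Cg, Ng, hCg⟩ := garg (s + 1) (by omega)
  refine ⟨Cg + (∑ j ∈ Finset.Icc 1 s, u j) * C, Ng + N + 2 * s + 3, fun n hn => ?_⟩
  have hns : 2 * s + 3 ≤ n := by omega
  -- Step 1 : peel off the top term of I1
  have step1 : v n = u n - ∑ k ∈ Finset.Icc 1 (n-1), v k * u (n - k) := by
    have h := Finset.sum_Icc_succ_top (by omega : 1 ≤ (n-1) + 1) (fun k => v k * u (n - k))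
    rw [show n - 1 + 1 = n from by omega] at h
    rw [I1 n (by omega), h, show n - n = 0 from by omega, hu0]
    ring
  -- Step 2 : split the sum into three ranges
  have step2 : ∑ k ∈ Finset.Icc 1 (n-1), v k * u (n - k) =
      (∑ k ∈ Finset.Icc 1 s, v k * u (n - k))
      + (∑ k ∈ Finset.Icc (s+1) (n-s-1), v k * u (n - k))
      + (∑ k ∈ Finset.Icc (n-s) (n-1), v k * u (n - k)) := by
    have h := split3 (fun k => v k * u (n - k)) s (n-s-1) (n-1) (by omega) (by omega)
    rw [show n - s - 1 + 1 = n - s from by omega] at h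
    exact h
  -- Step 3 : reflect the top range
  have step3 : ∑ k ∈ Finset.Icc (n-s) (n-1), v k * u (n - k) =
      ∑ j ∈ Finset.Icc 1 s, u j * v (n - j) := by
    rw [sum_Icc_reflect (fun k => v k * u (n - k)) (n-s) (n-1) n (by omega) (by omega)]
    rw [show n - (n-1) = 1 from by omega, show n - (n-s) = s from by omega]
    refine Finset.sum_congr rfl fun j hj => ?_
    simp only [Finset.mem_Icc] at hj
    rw [show n - (n - j) = j from by omega]
    ring
  -- Step 4 : remainder bounds from the inductive hypothesis
  have step4 : ∀ j ∈ Finset.Icc 1 s,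
      |v (n-j) - ∑ i ∈ Finset.range (s - j + 1), g i * u (n - j - i)| ≤ C * u (n - (s+1)) := by
    intro j hj
    simp only [Finset.mem_Icc] at hj
    have h := IH (s - j) (by omega) (n - j) (by omega)
    rw [show n - j - (s - j + 1) = n - (s + 1) from by omega] at h
    exact h
  -- Step 5 : the double sum rearrangement
  have step5 : ∑ j ∈ Finset.Icc 1 s, u j * (∑ i ∈ Finset.range (s - j + 1), g i * u (n - j - i)) =
      ∑ m ∈ Finset.Icc 1 s, (∑ j ∈ Finset.Icc 1 m, u j * g (m - j)) * u (n - m) := by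
    have h1 : ∀ j ∈ Finset.Icc 1 s,
        u j * (∑ i ∈ Finset.range (s - j + 1), g i * u (n - j - i)) =
        ∑ i ∈ Finset.range (s - j + 1), u j * (g i * u (n - j - i)) := fun j _ =>
      Finset.mul_sum _ _ _
    rw [Finset.sum_congr rfl h1, double_sum_tri (fun j i => u j * (g i * u (n - j - i))) s]
    refine Finset.sum_congr rfl fun m hm => ?_
    simp only [Finset.mem_Icc] at hm
    rw [Finset.sum_mul]
    refine Finset.sum_congr rfl fun j hj => ?_
    simp only [Finset.mem_Icc] at hj
    rw [show n - j - (m - j) = n - m from by omega]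
    ring
  -- Step 6 : the vanishing bracket
  have step6 : (∑ k ∈ Finset.Icc 1 s, v k * u (n - k))
      + ((∑ j ∈ Finset.Icc 1 s, u j * (∑ i ∈ Finset.range (s - j + 1), g i * u (n - j - i)))
      + (∑ m ∈ Finset.Icc 1 s, g m * u (n - m))) = 0 := by
    rw [step5, ← Finset.sum_add_distrib, ← Finset.sum_add_distrib]
    refine Finset.sum_eq_zero fun m hm => ?_
    simp only [Finset.mem_Icc] at hm
    have h := idG m hm.1
    calc v m * u (n - m) + ((∑ j ∈ Finset.Icc 1 m, u j * g (m - j)) * u (n - m)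
            + g m * u (n - m))
        = (v m + ((∑ j ∈ Finset.Icc 1 m, u j * g (m - j)) + g m)) * u (n - m) := by ring
      _ = 0 := by rw [h, zero_mul]
  -- Step 7 : the target sum
  have step7 : ∑ i ∈ Finset.range (s + 1), g i * u (n - i) =
      u n + ∑ m ∈ Finset.Icc 1 s, g m * u (n - m) := by
    rw [Finset.sum_range_succ' (fun i => g i * u (n - i)) s]
    simp only [Nat.sub_zero, hg0, one_mul]
    rw [add_comm]
    congr 1
    rw [← Finset.Ico_add_one_right_eq_Icc, Finset.sum_Ico_eq_sum_range]
    rw [show s + 1 - 1 = s from rfl]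
    exact Finset.sum_congr rfl fun i _ => by rw [add_comm 1 i]
  -- Main identity
  have key : v n - ∑ i ∈ Finset.range (s + 1), g i * u (n - i) =
      -((∑ k ∈ Finset.Icc (s+1) (n-s-1), v k * u (n - k))
        + ∑ j ∈ Finset.Icc 1 s,
            u j * (v (n-j) - ∑ i ∈ Finset.range (s - j + 1), g i * u (n - j - i))) := by
    have expand : ∑ j ∈ Finset.Icc 1 s,
        u j * (v (n-j) - ∑ i ∈ Finset.range (s - j + 1), g i * u (n - j - i)) =
        (∑ j ∈ Finset.Icc 1 s, u j * v (n-j))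
          - ∑ j ∈ Finset.Icc 1 s,
              u j * (∑ i ∈ Finset.range (s - j + 1), g i * u (n - j - i)) := by
      rw [← Finset.sum_sub_distrib]
      exact Finset.sum_congr rfl fun j _ => by ring
    rw [expand, step1, step2, step3, step7]
    have h6 := step6
    nlinarith [h6]
  rw [key]
  -- Final bounds
  have hb1 : ∑ k ∈ Finset.Icc (s+1) (n-s-1), v k * u (n - k) ≤ Cg * u (n - (s+1)) := by
    have h1 : ∑ k ∈ Finset.Icc (s+1) (n-s-1), v k * u (n - k) ≤
        ∑ k ∈ Finset.Icc (s+1) (n - (s+1)), u k * u (n - k) := by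
      rw [show n - s - 1 = n - (s+1) from by omega]
      refine Finset.sum_le_sum fun k _ => ?_
      exact mul_le_mul_of_nonneg_right (hvu k) (le_of_lt (hupos _))
    exact le_trans h1 (hCg n (by omega))
  have hb0 : 0 ≤ ∑ k ∈ Finset.Icc (s+1) (n-s-1), v k * u (n - k) :=
    Finset.sum_nonneg fun k _ => mul_nonneg (hv0 k) (le_of_lt (hupos _))
  have hb2 : |∑ j ∈ Finset.Icc 1 s,
      u j * (v (n-j) - ∑ i ∈ Finset.range (s - j + 1), g i * u (n - j - i))| ≤
      (∑ j ∈ Finset.Icc 1 s, u j) * C * u (n - (s+1)) := by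
    calc |∑ j ∈ Finset.Icc 1 s,
          u j * (v (n-j) - ∑ i ∈ Finset.range (s - j + 1), g i * u (n - j - i))|
        ≤ ∑ j ∈ Finset.Icc 1 s,
            |u j * (v (n-j) - ∑ i ∈ Finset.range (s - j + 1), g i * u (n - j - i))| :=
          Finset.abs_sum_le_sum_abs _ _
      _ ≤ ∑ j ∈ Finset.Icc 1 s, u j * (C * u (n - (s+1))) := by
          refine Finset.sum_le_sum fun j hj => ?_
          rw [abs_mul, abs_of_pos (hupos j)]
          exact mul_le_mul_of_nonneg_left (step4 j hj) (le_of_lt (hupos j))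
      _ = (∑ j ∈ Finset.Icc 1 s, u j) * C * u (n - (s+1)) := by
          rw [← Finset.sum_mul, mul_assoc]
  calc |-((∑ k ∈ Finset.Icc (s+1) (n-s-1), v k * u (n - k))
        + ∑ j ∈ Finset.Icc 1 s,
            u j * (v (n-j) - ∑ i ∈ Finset.range (s - j + 1), g i * u (n - j - i)))|
      ≤ |∑ k ∈ Finset.Icc (s+1) (n-s-1), v k * u (n - k)|
        + |∑ j ∈ Finset.Icc 1 s,
            u j * (v (n-j) - ∑ i ∈ Finset.range (s - j + 1), g i * u (n - j - i))| := by
        rw [abs_neg]; exact abs_add_le _ _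
    _ ≤ Cg * u (n - (s+1)) + (∑ j ∈ Finset.Icc 1 s, u j) * C * u (n - (s+1)) := by
        refine add_le_add ?_ hb2
        rw [abs_of_nonneg hb0]; exact hb1
    _ = (Cg + (∑ j ∈ Finset.Icc 1 s, u j) * C) * u (n - (s+1)) := by ring

section helpers
variable (u v g : ℕ → ℝ)

lemma range_shift (f : ℕ → ℝ) (n : ℕ) :
    ∑ i ∈ Finset.range n, f (i + 1) = ∑ k ∈ Finset.Icc 1 n, f k := by
  rw [← Finset.Ico_add_one_right_eq_Icc, Finset.sum_Ico_eq_sum_range]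
  rw [show n + 1 - 1 = n from rfl]
  exact (Finset.sum_congr rfl fun i _ => by rw [add_comm 1 i]).symm

lemma split2 (f : ℕ → ℝ) (a c : ℕ) (h1 : a ≤ c) :
    ∑ k ∈ Finset.Icc 1 c, f k =
      (∑ k ∈ Finset.Icc 1 a, f k) + (∑ k ∈ Finset.Icc (a+1) c, f k) := by
  have e0 : ∀ m : ℕ, Finset.Icc 1 m = Finset.Ioc 0 m := fun m => by
    rw [← Finset.Icc_add_one_left_eq_Ioc]; rfl
  have e1 : ∀ x y : ℕ, Finset.Icc (x+1) y = Finset.Ioc x y := fun x y => by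
    rw [← Finset.Icc_add_one_left_eq_Ioc]
  rw [e0, e0, e1, Finset.sum_Ioc_consecutive f (Nat.zero_le a) h1]
end helpers

lemma expansion_unif (u v g : ℕ → ℝ)
    (hu0 : u 0 = 1)
    (hupos : ∀ n, 0 < u n)
    (hv0 : ∀ n, 0 ≤ v n) (hvu : ∀ n, v n ≤ u n)
    (I1 : ∀ n, 1 ≤ n → u n = ∑ k ∈ Finset.Icc 1 n, v k * u (n - k))
    (idG : ∀ m, 1 ≤ m → v m + ((∑ j ∈ Finset.Icc 1 m, u j * g (m - j)) + g m) = 0)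
    (hg0 : g 0 = 1)
    (garg : ∀ s : ℕ, 1 ≤ s → ∃ C : ℝ, ∃ N : ℕ, ∀ n, N ≤ n →
        ∑ k ∈ Finset.Icc s (n - s), u k * u (n - k) ≤ C * u (n - s)) :
    ∀ s : ℕ, ∃ C : ℝ, ∃ N : ℕ, ∀ t, t ≤ s → ∀ n, N ≤ n →
        |v n - ∑ i ∈ Finset.range (t + 1), g i * u (n - i)| ≤ C * u (n - (t + 1)) := by
  intro s
  induction s with
  | zero =>
    obtain ⟨C', N', h'⟩ := expansion_step u v g hu0 hupos hv0 hvu I1 idG hg0 garg 0 0 0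
      (fun t ht => by omega)
    exact ⟨C', N', fun t ht n hn => by
      have : t = 0 := by omega
      subst this
      exact h' n hn⟩
  | succ s ih =>
    obtain ⟨C, N, h⟩ := ih
    obtain ⟨C', N', h'⟩ := expansion_step u v g hu0 hupos hv0 hvu I1 idG hg0 garg (s+1) C N
      (fun t ht n hn => h t (by omega) n hn)
    refine ⟨max C C', max N N', fun t ht n hn => ?_⟩
    rcases Nat.lt_or_ge t (s+1) with h1 | h1
    · exact le_trans (h t (by omega) n (by omega))
        (mul_le_mul_of_nonneg_right (le_max_left _ _) (le_of_lt (hupos _)))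
    · have : t = s + 1 := by omega
      subst this
      exact le_trans (h' n (by omega))
        (mul_le_mul_of_nonneg_right (le_max_right _ _) (le_of_lt (hupos _)))

lemma final_bound (u v w g : ℕ → ℝ)
    (hu0 : u 0 = 1)
    (hupos : ∀ n, 0 < u n)
    (hv0 : ∀ n, 0 ≤ v n) (hvu : ∀ n, v n ≤ u n)
    (I1 : ∀ n, 1 ≤ n → u n = ∑ k ∈ Finset.Icc 1 n, v k * u (n - k))
    (I2 : ∀ n : ℕ, 1 ≤ n → (n : ℝ) * w n = ∑ k ∈ Finset.Icc 1 n, (k : ℝ) * v k * u (n - k))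
    (idG : ∀ m, 1 ≤ m → v m + ((∑ j ∈ Finset.Icc 1 m, u j * g (m - j)) + g m) = 0)
    (idT : ∀ m : ℕ, 1 ≤ m → ∑ j ∈ Finset.Icc 1 m, (j : ℝ) * u j * g (m - j) = (m : ℝ) * v m)
    (hg0 : g 0 = 1)
    (garg : ∀ s : ℕ, 1 ≤ s → ∃ C : ℝ, ∃ N : ℕ, ∀ n, N ≤ n →
        ∑ k ∈ Finset.Icc s (n - s), u k * u (n - k) ≤ C * u (n - s))
    (r : ℕ) :
    ∃ C : ℝ, ∃ N : ℕ, ∀ n, N ≤ n →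
      |w n - u n + ∑ k ∈ Finset.Icc 1 r, v k * u (n - k)| ≤ C * u (n - (r + 1)) := by
  obtain ⟨Cg, Ng, hCg⟩ := garg (r + 1) (by omega)
  obtain ⟨CE, NE, hE⟩ := expansion_unif u v g hu0 hupos hv0 hvu I1 idG hg0 garg r
  refine ⟨(∑ j ∈ Finset.Icc 1 r, u j) * CE + Cg, Ng + NE + 2 * r + 3, fun n hn => ?_⟩
  have hns : 2 * r + 3 ≤ n := by omega
  have hnpos : (0 : ℝ) < (n : ℝ) := by
    have : 0 < n := by omega
    exact_mod_cast this
  set T1 := ∑ k ∈ Finset.Icc 1 r, (k : ℝ) * v k * u (n - k) with hT1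
  set P := ∑ j ∈ Finset.Icc 1 (n - (r+1)), (j : ℝ) * u j * v (n - j) with hP
  -- n * w n = T1 + T2 , u n = S1 + S2
  have hA : (n : ℝ) * w n = T1 + ∑ k ∈ Finset.Icc (r+1) n, (k : ℝ) * v k * u (n - k) := by
    rw [I2 n (by omega), split2 (fun k => (k : ℝ) * v k * u (n - k)) r n (by omega)]
  have hB : u n = (∑ k ∈ Finset.Icc 1 r, v k * u (n - k))
      + ∑ k ∈ Finset.Icc (r+1) n, v k * u (n - k) := by
    rw [I1 n (by omega), split2 (fun k => v k * u (n - k)) r n (by omega)]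
  -- T2 - n * S2 = -P
  have hC : (∑ k ∈ Finset.Icc (r+1) n, (k : ℝ) * v k * u (n - k))
      - (n : ℝ) * ∑ k ∈ Finset.Icc (r+1) n, v k * u (n - k) = -P := by
    rw [Finset.mul_sum, ← Finset.sum_sub_distrib]
    have e1 : ∀ k ∈ Finset.Icc (r+1) n,
        (k : ℝ) * v k * u (n - k) - (n : ℝ) * (v k * u (n - k)) =
        -(((n - k : ℕ) : ℝ) * v k * u (n - k)) := by
      intro k hk
      simp only [Finset.mem_Icc] at hk
      rw [Nat.cast_sub hk.2]
      ring
    rw [Finset.sum_congr rfl e1, Finset.sum_neg_distrib]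
    congr 1
    -- reflect
    have e2 : ∑ k ∈ Finset.Icc (r+1) n, ((n - k : ℕ) : ℝ) * v k * u (n - k) =
        ∑ k ∈ Finset.Icc (r+1) (n-1), ((n - k : ℕ) : ℝ) * v k * u (n - k) := by
      have h := Finset.sum_Icc_succ_top (by omega : r + 1 ≤ (n-1) + 1)
        (fun k => ((n - k : ℕ) : ℝ) * v k * u (n - k))
      rw [show n - 1 + 1 = n from by omega] at h
      rw [h, show n - n = 0 from by omega]
      simp
    rw [e2, sum_Icc_reflect (fun k => ((n - k : ℕ) : ℝ) * v k * u (n - k)) (r+1) (n-1) n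
      (by omega) (by omega)]
    rw [show n - (n-1) = 1 from by omega, show n - (r+1) = n - (r+1) from rfl]
    refine Finset.sum_congr rfl fun j hj => ?_
    simp only [Finset.mem_Icc] at hj
    rw [show n - (n - j) = j from by omega]
    ring
  have keyA : (n : ℝ) * (w n - u n + ∑ k ∈ Finset.Icc 1 r, v k * u (n - k)) = T1 - P := by
    linear_combination hA - (n : ℝ) * hB + hC
  -- split P
  have hPsplit : P = (∑ j ∈ Finset.Icc 1 r, (j : ℝ) * u j * v (n - j))
      + ∑ j ∈ Finset.Icc (r+1) (n - (r+1)), (j : ℝ) * u j * v (n - j) :=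
    split2 (fun j => (j : ℝ) * u j * v (n - j)) r (n - (r+1)) (by omega)
  -- the cancellation T1 = sum of expansions
  have hT1eq : T1 = ∑ j ∈ Finset.Icc 1 r,
      (j : ℝ) * u j * (∑ i ∈ Finset.range (r - j + 1), g i * u (n - j - i)) := by
    have h1 : ∀ j ∈ Finset.Icc 1 r,
        (j : ℝ) * u j * (∑ i ∈ Finset.range (r - j + 1), g i * u (n - j - i)) =
        ∑ i ∈ Finset.range (r - j + 1), (j : ℝ) * u j * (g i * u (n - j - i)) := fun j _ =>
      Finset.mul_sum _ _ _
    rw [Finset.sum_congr rfl h1,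
      double_sum_tri (fun j i => (j : ℝ) * u j * (g i * u (n - j - i))) r]
    have h2 : ∀ m ∈ Finset.Icc 1 r,
        ∑ j ∈ Finset.Icc 1 m, (j : ℝ) * u j * (g (m - j) * u (n - j - (m - j))) =
        (m : ℝ) * v m * u (n - m) := by
      intro m hm
      simp only [Finset.mem_Icc] at hm
      have h3 : ∀ j ∈ Finset.Icc 1 m,
          (j : ℝ) * u j * (g (m - j) * u (n - j - (m - j))) =
          ((j : ℝ) * u j * g (m - j)) * u (n - m) := by
        intro j hj
        simp only [Finset.mem_Icc] at hj
        rw [show n - j - (m - j) = n - m from by omega]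
        ring
      rw [Finset.sum_congr rfl h3, ← Finset.sum_mul, idT m hm.1]
    rw [Finset.sum_congr rfl h2]
  have hP1 : T1 - (∑ j ∈ Finset.Icc 1 r, (j : ℝ) * u j * v (n - j)) =
      -∑ j ∈ Finset.Icc 1 r, (j : ℝ) * u j *
        (v (n - j) - ∑ i ∈ Finset.range (r - j + 1), g i * u (n - j - i)) := by
    rw [hT1eq, ← Finset.sum_sub_distrib, ← Finset.sum_neg_distrib]
    exact Finset.sum_congr rfl fun j _ => by ring
  -- bounds
  have hRb : ∀ j ∈ Finset.Icc 1 r,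
      |(j : ℝ) * u j * (v (n - j) - ∑ i ∈ Finset.range (r - j + 1), g i * u (n - j - i))| ≤
      (n : ℝ) * (u j * (CE * u (n - (r+1)))) := by
    intro j hj
    simp only [Finset.mem_Icc] at hj
    have h := hE (r - j) (by omega) (n - j) (by omega)
    rw [show n - j - (r - j + 1) = n - (r + 1) from by omega] at h
    rw [abs_mul, abs_mul, abs_of_pos (hupos j), Nat.abs_cast]
    have hjn : (j : ℝ) ≤ (n : ℝ) := by exact_mod_cast (by omega : j ≤ n)
    calc (j : ℝ) * u j * |v (n - j) - ∑ i ∈ Finset.range (r - j + 1), g i * u (n - j - i)|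
        ≤ (n : ℝ) * u j * (CE * u (n - (r+1))) := by
          refine mul_le_mul (mul_le_mul_of_nonneg_right hjn (le_of_lt (hupos j))) h
            (abs_nonneg _) ?_
          have h4 := hupos j
          positivity
      _ = (n : ℝ) * (u j * (CE * u (n - (r+1)))) := by ring
  have hP2b : |∑ j ∈ Finset.Icc (r+1) (n - (r+1)), (j : ℝ) * u j * v (n - j)| ≤
      (n : ℝ) * (Cg * u (n - (r+1))) := by
    have h0 : 0 ≤ ∑ j ∈ Finset.Icc (r+1) (n - (r+1)), (j : ℝ) * u j * v (n - j) := by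
      refine Finset.sum_nonneg fun j _ => ?_
      have := hupos j
      have := hv0 (n - j)
      positivity
    rw [abs_of_nonneg h0]
    have h1 : ∑ j ∈ Finset.Icc (r+1) (n - (r+1)), (j : ℝ) * u j * v (n - j) ≤
        ∑ j ∈ Finset.Icc (r+1) (n - (r+1)), (n : ℝ) * (u j * u (n - j)) := by
      refine Finset.sum_le_sum fun j hj => ?_
      simp only [Finset.mem_Icc] at hj
      have hjn : (j : ℝ) ≤ (n : ℝ) := by exact_mod_cast (by omega : j ≤ n)
      calc (j : ℝ) * u j * v (n - j) ≤ (j : ℝ) * u j * u (n - j) := by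
            refine mul_le_mul_of_nonneg_left (hvu _) ?_
            have h2 : (0:ℝ) ≤ (j:ℝ) := by positivity
            have := hupos j
            positivity
        _ ≤ (n : ℝ) * (u j * u (n - j)) := by
            rw [mul_assoc]
            refine mul_le_mul_of_nonneg_right hjn ?_
            have := hupos j; have := hupos (n - j); positivity
    rw [← Finset.mul_sum] at h1
    exact le_trans h1 (mul_le_mul_of_nonneg_left (hCg n (by omega)) (le_of_lt hnpos))
  -- put everything together
  have habs : |(n : ℝ) * (w n - u n + ∑ k ∈ Finset.Icc 1 r, v k * u (n - k))| ≤
      (n : ℝ) * (((∑ j ∈ Finset.Icc 1 r, u j) * CE + Cg) * u (n - (r+1))) := by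
    rw [keyA, hPsplit, show T1 - ((∑ j ∈ Finset.Icc 1 r, (j : ℝ) * u j * v (n - j))
      + ∑ j ∈ Finset.Icc (r+1) (n - (r+1)), (j : ℝ) * u j * v (n - j)) =
      (T1 - ∑ j ∈ Finset.Icc 1 r, (j : ℝ) * u j * v (n - j))
      - ∑ j ∈ Finset.Icc (r+1) (n - (r+1)), (j : ℝ) * u j * v (n - j) from by ring, hP1]
    calc |(-∑ j ∈ Finset.Icc 1 r, (j : ℝ) * u j *
            (v (n - j) - ∑ i ∈ Finset.range (r - j + 1), g i * u (n - j - i)))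
          - ∑ j ∈ Finset.Icc (r+1) (n - (r+1)), (j : ℝ) * u j * v (n - j)|
        ≤ |∑ j ∈ Finset.Icc 1 r, (j : ℝ) * u j *
            (v (n - j) - ∑ i ∈ Finset.range (r - j + 1), g i * u (n - j - i))|
          + |∑ j ∈ Finset.Icc (r+1) (n - (r+1)), (j : ℝ) * u j * v (n - j)| := by
          have habs2 : ∀ A B : ℝ, |(-A) - B| ≤ |A| + |B| := fun A B => by
            rw [show -A - B = -(A + B) from by ring, abs_neg]
            exact abs_add_le _ _
          exact habs2 _ _
      _ ≤ (∑ j ∈ Finset.Icc 1 r, (n : ℝ) * (u j * (CE * u (n - (r+1)))))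
          + (n : ℝ) * (Cg * u (n - (r+1))) := by
          refine add_le_add (le_trans (Finset.abs_sum_le_sum_abs _ _)
            (Finset.sum_le_sum hRb)) hP2b
      _ = (n : ℝ) * (((∑ j ∈ Finset.Icc 1 r, u j) * CE + Cg) * u (n - (r+1))) := by
          rw [← Finset.mul_sum, ← Finset.sum_mul]
          ring
  rw [abs_mul, Nat.abs_cast] at habs
  exact le_of_mul_le_mul_left habs hnpos

lemma coeff_mul_eq (F G : PowerSeries ℝ) (n : ℕ) :
    PowerSeries.coeff n (F * G) =
      ∑ k ∈ Finset.range (n + 1), PowerSeries.coeff k F * PowerSeries.coeff (n - k) G := by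
  rw [PowerSeries.coeff_mul, Finset.Nat.sum_antidiagonal_eq_sum_range_succ_mk]

/-- SET asymptotics. -/
theorem set_asymptotics
    (a c d : ℕ → ℕ)
    (ha0 : a 0 = 1) (hc0 : c 0 = 0) (hd0 : d 0 = 0)
    (hapos : ∀ n, 0 < a n)
    (hexp : (PowerSeries.mk fun n => (a n : ℝ) / (Nat.factorial n)) =
      expPS (PowerSeries.mk fun n => (c n : ℝ) / (Nat.factorial n)))
    (hseq : (PowerSeries.mk fun n => (a n : ℝ) / (Nat.factorial n)) *
        (1 - PowerSeries.mk fun n => (d n : ℝ) / (Nat.factorial n)) = 1)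
    (hgarg : Gargantuan fun n => (a n : ℝ) / (Nat.factorial n)) :
    ∀ r : ℕ,
      (fun n => (c n : ℝ) / (a n) -
          (1 - ∑ k ∈ Finset.Icc 1 r,
            (d k : ℝ) * (n.choose k) * (a (n - k)) / (a n)))
        =O[atTop] fun n => (n.choose (r + 1) : ℝ) * (a (n - (r + 1))) / (a n) := by
  intro r
  set u : ℕ → ℝ := fun n => (a n : ℝ) / (Nat.factorial n) with hu_def
  set v : ℕ → ℝ := fun n => (d n : ℝ) / (Nat.factorial n) with hv_def
  set w : ℕ → ℝ := fun n => (c n : ℝ) / (Nat.factorial n) with hw_def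
  have hfac : ∀ m : ℕ, (0 : ℝ) < (Nat.factorial m : ℝ) := fun m => by
    exact_mod_cast m.factorial_pos
  have hupos : ∀ n, 0 < u n := fun n => div_pos (by exact_mod_cast hapos n) (hfac n)
  have hu0 : u 0 = 1 := by simp [hu_def, ha0]
  have hv0' : v 0 = 0 := by simp [hv_def, hd0]
  have hw0 : w 0 = 0 := by simp [hw_def, hc0]
  have hvnn : ∀ n, 0 ≤ v n := fun n => by
    rw [hv_def]
    positivity
  -- power series identities
  have hconstC : PowerSeries.constantCoeff (PowerSeries.mk w) = 0 := by
    simpa using hw0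
  have hderivA : PowerSeries.derivative ℝ (PowerSeries.mk u) =
      PowerSeries.derivative ℝ (PowerSeries.mk w) * PowerSeries.mk u := by
    rw [hexp, deriv_expPS _ hconstC, ← hexp]
  have h1 : PowerSeries.mk u * PowerSeries.derivative ℝ (1 - PowerSeries.mk v)
      + (1 - PowerSeries.mk v) * PowerSeries.derivative ℝ (PowerSeries.mk u) = 0 := by
    have h := congrArg (PowerSeries.derivative ℝ) hseq
    rw [Derivation.leibniz, Derivation.map_one_eq_zero] at h
    simpa [smul_eq_mul] using h
  have hnegd : PowerSeries.derivative ℝ (1 - PowerSeries.mk v) =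
      -(PowerSeries.derivative ℝ (PowerSeries.mk v)) := by
    rw [map_sub, Derivation.map_one_eq_zero]
    ring
  rw [hnegd] at h1
  have hCD : PowerSeries.derivative ℝ (PowerSeries.mk w) =
      PowerSeries.derivative ℝ (PowerSeries.mk v) * PowerSeries.mk u := by
    calc PowerSeries.derivative ℝ (PowerSeries.mk w)
        = PowerSeries.derivative ℝ (PowerSeries.mk w)
          * (PowerSeries.mk u * (1 - PowerSeries.mk v)) := by rw [hseq, mul_one]
      _ = PowerSeries.derivative ℝ (PowerSeries.mk u) * (1 - PowerSeries.mk v) := by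
          rw [hderivA]; ring
      _ = PowerSeries.derivative ℝ (PowerSeries.mk v) * PowerSeries.mk u := by
          linear_combination h1
  have hAG : PowerSeries.mk u * ((1 - PowerSeries.mk v) * (1 - PowerSeries.mk v)) =
      1 - PowerSeries.mk v := by
    rw [← mul_assoc, hseq, one_mul]
  have hDG : PowerSeries.derivative ℝ (PowerSeries.mk u)
      * ((1 - PowerSeries.mk v) * (1 - PowerSeries.mk v)) =
      PowerSeries.derivative ℝ (PowerSeries.mk v) := by
    have h3 : PowerSeries.derivative ℝ (PowerSeries.mk u) * (1 - PowerSeries.mk v) =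
        PowerSeries.derivative ℝ (PowerSeries.mk v) * PowerSeries.mk u := by
      linear_combination h1
    calc PowerSeries.derivative ℝ (PowerSeries.mk u)
        * ((1 - PowerSeries.mk v) * (1 - PowerSeries.mk v))
        = (PowerSeries.derivative ℝ (PowerSeries.mk u) * (1 - PowerSeries.mk v))
          * (1 - PowerSeries.mk v) := by ring
      _ = PowerSeries.derivative ℝ (PowerSeries.mk v)
          * (PowerSeries.mk u * (1 - PowerSeries.mk v)) := by rw [h3]; ring
      _ = PowerSeries.derivative ℝ (PowerSeries.mk v) := by rw [hseq, mul_one]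
  set g : ℕ → ℝ :=
    fun m => PowerSeries.coeff m ((1 - PowerSeries.mk v) * (1 - PowerSeries.mk v)) with hg_def
  -- sequence identities
  have I1 : ∀ n : ℕ, 1 ≤ n → u n = ∑ k ∈ Finset.Icc 1 n, v k * u (n - k) := by
    intro n hn
    have h := congrArg (PowerSeries.coeff n) hseq
    rw [mul_sub, mul_one, map_sub, PowerSeries.coeff_one, if_neg (by omega),
      mul_comm (PowerSeries.mk u), coeff_mul_eq] at h
    simp only [PowerSeries.coeff_mk] at h
    rw [Finset.sum_range_succ' (fun k => v k * u (n - k)) n, hv0'] at h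
    rw [range_shift (fun k => v k * u (n - k)) n] at h
    simp only [zero_mul, add_zero] at h
    linarith [h]
  have hvu : ∀ n, v n ≤ u n := by
    intro n
    rcases Nat.eq_zero_or_pos n with h | h
    · subst h; rw [hv0', hu0]; norm_num
    · have h2 : v n * u (n - n) ≤ ∑ k ∈ Finset.Icc 1 n, v k * u (n - k) :=
        Finset.single_le_sum (f := fun k => v k * u (n - k))
          (fun k _ => mul_nonneg (hvnn k) (le_of_lt (hupos _)))
          (Finset.mem_Icc.2 ⟨h, le_refl n⟩)
      rw [Nat.sub_self, hu0, mul_one] at h2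
      rw [I1 n h]
      exact h2
  have I2 : ∀ n : ℕ, 1 ≤ n → (n : ℝ) * w n =
      ∑ k ∈ Finset.Icc 1 n, (k : ℝ) * v k * u (n - k) := by
    intro n hn
    have h := congrArg (PowerSeries.coeff (n - 1)) hCD
    rw [PowerSeries.coeff_derivative, coeff_mul_eq] at h
    simp only [PowerSeries.coeff_derivative, PowerSeries.coeff_mk] at h
    rw [show n - 1 + 1 = n from by omega] at h
    rw [show ((n - 1 : ℕ) : ℝ) + 1 = (n : ℝ) from by rw [Nat.cast_sub hn]; ring] at h
    rw [← range_shift (fun k => (k : ℝ) * v k * u (n - k)) n]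
    calc (n : ℝ) * w n = w n * (n : ℝ) := by ring
      _ = ∑ k ∈ Finset.range n,
            v (k + 1) * ((k : ℝ) + 1) * u (n - 1 - k) := h
      _ = ∑ i ∈ Finset.range n, ((i + 1 : ℕ) : ℝ) * v (i + 1) * u (n - (i + 1)) := by
          refine Finset.sum_congr rfl fun i hi => ?_
          simp only [Finset.mem_range] at hi
          rw [show n - (i + 1) = n - 1 - i from by omega]
          push_cast
          ring
  have idG : ∀ m : ℕ, 1 ≤ m →
      v m + ((∑ j ∈ Finset.Icc 1 m, u j * g (m - j)) + g m) = 0 := by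
    intro m hm
    have h := congrArg (PowerSeries.coeff m) hAG
    rw [coeff_mul_eq, map_sub, PowerSeries.coeff_one, if_neg (by omega)] at h
    simp only [PowerSeries.coeff_mk] at h
    rw [Finset.sum_range_succ' (fun k => u k * g (m - k)) m] at h
    rw [range_shift (fun k => u k * g (m - k)) m] at h
    rw [Nat.sub_zero, hu0, one_mul] at h
    simp only [hg_def]
    linarith [h]
  have idT : ∀ m : ℕ, 1 ≤ m →
      ∑ j ∈ Finset.Icc 1 m, (j : ℝ) * u j * g (m - j) = (m : ℝ) * v m := by
    intro m hm
    have h := congrArg (PowerSeries.coeff (m - 1)) hDG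
    rw [coeff_mul_eq, PowerSeries.coeff_derivative] at h
    simp only [PowerSeries.coeff_derivative, PowerSeries.coeff_mk] at h
    rw [show m - 1 + 1 = m from by omega] at h
    rw [show ((m - 1 : ℕ) : ℝ) + 1 = (m : ℝ) from by rw [Nat.cast_sub hm]; ring] at h
    rw [← range_shift (fun j => (j : ℝ) * u j * g (m - j)) m]
    calc ∑ i ∈ Finset.range m, ((i + 1 : ℕ) : ℝ) * u (i + 1) * g (m - (i + 1))
        = ∑ k ∈ Finset.range m,
            u (k + 1) * ((k : ℝ) + 1)
              * PowerSeries.coeff (m - 1 - k)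
                  ((1 - PowerSeries.mk v) * (1 - PowerSeries.mk v)) := by
          refine Finset.sum_congr rfl fun i hi => ?_
          simp only [Finset.mem_range] at hi
          simp only [hg_def]
          rw [show m - (i + 1) = m - 1 - i from by omega]
          push_cast
          ring
      _ = v m * (m : ℝ) := h
      _ = (m : ℝ) * v m := by ring
  have hg0 : g 0 = 1 := by
    simp only [hg_def]
    rw [PowerSeries.coeff_zero_eq_constantCoeff_apply, map_mul, map_sub, map_one]
    simp [hv0']
  -- gargantuan in elementary form
  have garg : ∀ s : ℕ, 1 ≤ s → ∃ C : ℝ, ∃ N : ℕ, ∀ n, N ≤ n →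
      ∑ k ∈ Finset.Icc s (n - s), u k * u (n - k) ≤ C * u (n - s) := by
    intro s hs
    obtain ⟨C, hC⟩ := Asymptotics.isBigO_iff.mp (hgarg.2 s hs)
    rw [Filter.eventually_atTop] at hC
    obtain ⟨N, hN⟩ := hC
    refine ⟨C, N, fun n hn => ?_⟩
    have h := hN n hn
    simp only [Real.norm_eq_abs] at h
    rw [abs_of_pos (hupos (n - s))] at h
    calc ∑ k ∈ Finset.Icc s (n - s), u k * u (n - k)
        = ∑ k ∈ Finset.Icc s (n - s), |u k * u (n - k)| := by
          refine Finset.sum_congr rfl fun k _ => ?_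
          rw [abs_of_pos (mul_pos (hupos k) (hupos (n - k)))]
      _ ≤ |(∑ k ∈ Finset.Icc s (n - s), |u k * u (n - k)|)| := le_abs_self _
      _ ≤ C * u (n - s) := h
  obtain ⟨Cf, Nf, hF⟩ := final_bound u v w g hu0 hupos hvnn hvu I1 I2 idG idT hg0 garg r
  -- final conversion
  rw [Asymptotics.isBigO_iff]
  refine ⟨Cf * (Nat.factorial (r + 1) : ℝ), Filter.eventually_atTop.2
    ⟨Nf + 2 * r + 3, fun n hn => ?_⟩⟩
  have hrn : r + 1 ≤ n := by omega
  have han : (0 : ℝ) < (a n : ℝ) := by exact_mod_cast hapos n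
  have hun : u n ≠ 0 := ne_of_gt (hupos n)
  have e_w : w n / u n = (c n : ℝ) / (a n : ℝ) := by
    rw [hw_def, hu_def]
    rw [div_div_div_comm]
    rw [div_self (ne_of_gt (hfac n)), div_one]
  have e_sum : ∀ k ∈ Finset.Icc 1 r,
      (d k : ℝ) * (n.choose k) * (a (n - k)) / (a n) = v k * u (n - k) / u n := by
    intro k hk
    simp only [Finset.mem_Icc] at hk
    rw [Nat.cast_choose ℝ (by omega : k ≤ n), hv_def, hu_def]
    have h1 : (Nat.factorial k : ℝ) ≠ 0 := ne_of_gt (hfac k)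
    have h2 : (Nat.factorial (n - k) : ℝ) ≠ 0 := ne_of_gt (hfac (n - k))
    have h3 : (Nat.factorial n : ℝ) ≠ 0 := ne_of_gt (hfac n)
    have h4 : (a n : ℝ) ≠ 0 := ne_of_gt han
    field_simp
  have e_target : (n.choose (r + 1) : ℝ) * (a (n - (r + 1))) / (a n) =
      u (n - (r + 1)) / ((Nat.factorial (r + 1) : ℝ) * u n) := by
    rw [Nat.cast_choose ℝ hrn, hu_def]
    have h1 : (Nat.factorial (r + 1) : ℝ) ≠ 0 := ne_of_gt (hfac (r + 1))
    have h2 : (Nat.factorial (n - (r + 1)) : ℝ) ≠ 0 := ne_of_gt (hfac (n - (r + 1)))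
    have h3 : (Nat.factorial n : ℝ) ≠ 0 := ne_of_gt (hfac n)
    have h4 : (a n : ℝ) ≠ 0 := ne_of_gt han
    field_simp
  have eq1 : (c n : ℝ) / (a n) -
      (1 - ∑ k ∈ Finset.Icc 1 r, (d k : ℝ) * (n.choose k) * (a (n - k)) / (a n)) =
      (w n - u n + ∑ k ∈ Finset.Icc 1 r, v k * u (n - k)) / u n := by
    rw [← e_w, Finset.sum_congr rfl e_sum, ← Finset.sum_div]
    field_simp
    ring
  rw [eq1, e_target]
  have hX := hF n (by omega)
  rw [Real.norm_eq_abs, Real.norm_eq_abs, abs_div, abs_of_pos (hupos n)]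
  have hpos2 : (0 : ℝ) < u (n - (r + 1)) / ((Nat.factorial (r + 1) : ℝ) * u n) :=
    div_pos (hupos _) (mul_pos (hfac _) (hupos n))
  rw [abs_of_pos hpos2]
  rw [div_le_iff₀ (hupos n)]
  calc |w n - u n + ∑ k ∈ Finset.Icc 1 r, v k * u (n - k)| ≤ Cf * u (n - (r + 1)) := hX
    _ = Cf * (Nat.factorial (r + 1) : ℝ)
        * (u (n - (r + 1)) / ((Nat.factorial (r + 1) : ℝ) * u n)) * u n := by
        field_simp
end

section
/- Define co_n by the identity in ℝ[[X]]: Σ_{n≥0} (n!)^2 X^n/n! = exp(Σ_{n≥1} co_n X^n/n!), and define ip_k by Σ_{k≥1} ip_k X^k = 1 − (Σ_{n≥0} n!·X^n)^{−1}. Then for every integer r ≥ 0, as n → ∞, co_n/(n!)^2 = 1 − Σ_{k=1}^{r} ip_k/(n)_k + O(1/n^{r+1}), where (n)_k = n(n−1)⋯(n−k+1) is the falling factorial. -/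
open Filter Asymptotics Finset

namespace OrigamiAux

open PowerSeries

lemma fa_def' : True := trivial

/-- real factorial -/
noncomputable def fa (n : ℕ) : ℝ := (Nat.factorial n : ℝ)

lemma fa_pos (n : ℕ) : 0 < fa n := by
  unfold fa; exact_mod_cast Nat.factorial_pos n

lemma fa_one_le (n : ℕ) : 1 ≤ fa n := by
  unfold fa; exact_mod_cast Nat.one_le_iff_ne_zero.mpr (Nat.factorial_ne_zero n)

lemma fa_succ (n : ℕ) : fa (n + 1) = (n + 1) * fa n := by
  unfold fa; push_cast [Nat.factorial_succ]; ring

/-- `j! (n-j)!` is maximized at the ends: aux version for `2j ≤ n`. -/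
lemma fmf_aux : ∀ (j : ℕ), ∀ (n s : ℕ), s ≤ j → 2 * j ≤ n →
    Nat.factorial j * Nat.factorial (n - j) ≤ Nat.factorial s * Nat.factorial (n - s) := by
  intro j
  induction j with
  | zero => intro n s hs _; interval_cases s; exact le_rfl
  | succ j ih =>
    intro n s hs hn
    rcases Nat.lt_or_ge s (j+1) with h | h
    · have hs' : s ≤ j := by omega
      have h1 : Nat.factorial (j+1) * Nat.factorial (n - (j+1)) ≤
          Nat.factorial j * Nat.factorial (n - j) := by
        have hnj : n - j = (n - (j+1)) + 1 := by omega
        rw [hnj, Nat.factorial_succ, Nat.factorial_succ]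
        have : (j + 1) ≤ (n - (j+1)) + 1 := by omega
        calc (j + 1) * Nat.factorial j * Nat.factorial (n - (j+1))
            ≤ ((n - (j+1)) + 1) * Nat.factorial j * Nat.factorial (n - (j+1)) := by
              exact Nat.mul_le_mul_right _ (Nat.mul_le_mul_right _ this)
          _ = Nat.factorial j * (((n - (j+1)) + 1) * Nat.factorial (n - (j+1))) := by ring
      exact h1.trans (ih n s hs' (by omega))
    · have : s = j + 1 := by omega
      subst this; exact le_rfl

/-- unimodality of `j!(n-j)!`: if `s ≤ j` and `j + s ≤ n` then `j!(n-j)! ≤ s!(n-s)!`. -/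
lemma fmf (n s j : ℕ) (h1 : s ≤ j) (h2 : j + s ≤ n) :
    Nat.factorial j * Nat.factorial (n - j) ≤ Nat.factorial s * Nat.factorial (n - s) := by
  rcases le_or_gt (2 * j) n with h | h
  · exact fmf_aux j n s h1 h
  · have h3 : s ≤ n - j := by omega
    have h4 : 2 * (n - j) ≤ n := by omega
    have := fmf_aux (n - j) n s h3 h4
    have hj : n - (n - j) = j := by omega
    rw [hj] at this
    linarith [this, Nat.mul_comm (Nat.factorial (n-j)) (Nat.factorial j)]

lemma fmf_real (n s j : ℕ) (h1 : s ≤ j) (h2 : j + s ≤ n) :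
    fa j * fa (n - j) ≤ fa s * fa (n - s) := by
  unfold fa; exact_mod_cast fmf n s j h1 h2

/-- `∑_{j=1}^{n-1} j!(n-j)! ≤ n!` (real). -/
lemma sumlem (n : ℕ) : ∑ j ∈ Icc 1 (n-1), fa j * fa (n - j) ≤ fa n := by
  rcases Nat.eq_zero_or_pos n with h | h
  · subst h; simp [fa]
  have hb : ∀ j ∈ Icc 1 (n-1), fa j * fa (n - j) ≤ fa (n-1) := by
    intro j hj
    simp only [mem_Icc] at hj
    have := fmf_real n 1 j hj.1 (by omega)
    have h1 : n - 1 + 1 = n := by omega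
    calc fa j * fa (n - j) ≤ fa 1 * fa (n - 1) := this
      _ = fa (n-1) := by unfold fa; norm_num
  calc ∑ j ∈ Icc 1 (n-1), fa j * fa (n - j) ≤ ∑ j ∈ Icc 1 (n-1), fa (n-1) :=
        Finset.sum_le_sum hb
    _ = ((n-1 : ℕ) : ℝ) * fa (n-1) := by
        rw [Finset.sum_const, Nat.card_Icc]; push_cast; ring_nf
    _ ≤ (n : ℝ) * fa (n-1) := by
        have : ((n-1:ℕ):ℝ) ≤ (n:ℝ) := by exact_mod_cast Nat.sub_le n 1
        nlinarith [fa_pos (n-1)]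
    _ = fa n := by
        have h1 : n = (n-1) + 1 := by omega
        rw [h1, fa_succ]; push_cast; ring_nf


lemma fa_def : ∀ n, fa n = (Nat.factorial n : ℝ) := fun _ => rfl

lemma fa_zero : fa 0 = 1 := by simp [fa]

lemma fa_mul (n : ℕ) (h : 1 ≤ n) : fa n = (n : ℝ) * fa (n-1) := by
  conv_lhs => rw [show n = (n-1)+1 by omega]
  rw [fa_succ]
  congr 1
  have : (n-1) + 1 = n := by omega
  exact_mod_cast congrArg (Nat.cast (R := ℝ)) this

/-- convolution bound. -/
lemma conv3 (k : ℕ) : ∑ p ∈ Finset.HasAntidiagonal.antidiagonal k, fa p.1 * fa p.2 ≤ 3 * fa k := by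
  rw [Finset.Nat.sum_antidiagonal_eq_sum_range_succ_mk]
  rcases Nat.eq_zero_or_pos k with h | h
  · subst h; simp [fa_zero]
  have hsplit : ∑ i ∈ range (k+1), fa i * fa (k - i)
      = fa 0 * fa k + ((∑ i ∈ Icc 1 (k-1), fa i * fa (k-i)) + fa k * fa (k-k)) := by
    rw [Finset.range_eq_Ico, Finset.sum_eq_sum_Ico_succ_bot (by omega : 0 < k + 1)]
    congr 1
    have h2 : Ico 1 (k+1) = Icc 1 (k-1) ∪ {k} := by
      ext x; simp only [mem_Ico, mem_Icc, mem_union, mem_singleton]; omega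
    rw [h2, Finset.sum_union]
    · simp
    · rw [Finset.disjoint_left]; intro x hx hx'
      simp only [mem_Icc, mem_singleton] at hx hx'; omega
  rw [hsplit, fa_zero, Nat.sub_self, fa_zero]
  have := sumlem k
  nlinarith [fa_pos k]

/-- gargantuan-type bound for factorials. -/
lemma garg (s n : ℕ) (hs : 1 ≤ s) (hn : 2*s + 2 ≤ n) :
    ∑ k ∈ Icc s (n - s), fa k * fa (n - k) ≤ (2 * fa s + fa (s+1)) * fa (n - s) := by
  have h1 : Icc s (n-s) = {s} ∪ (Icc (s+1) (n-s-1) ∪ {n-s}) := by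
    ext x; simp only [mem_Icc, mem_union, mem_singleton]; omega
  have hd1 : Disjoint (Icc (s+1) (n-s-1)) ({n-s} : Finset ℕ) := by
    rw [Finset.disjoint_left]; intro x hx hx'
    simp only [mem_Icc, mem_singleton] at hx hx'; omega
  have hd2 : Disjoint ({s} : Finset ℕ) (Icc (s+1) (n-s-1) ∪ {n-s}) := by
    rw [Finset.disjoint_left]; intro x hx hx'
    simp only [mem_Icc, mem_union, mem_singleton] at hx hx'; omega
  rw [h1, Finset.sum_union hd2, Finset.sum_union hd1]
  simp only [Finset.sum_singleton]
  have hmid : ∑ k ∈ Icc (s+1) (n-s-1), fa k * fa (n-k) ≤ fa (s+1) * fa (n-s) := by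
    have hb : ∀ k ∈ Icc (s+1) (n-s-1), fa k * fa (n-k) ≤ fa (s+1) * fa (n-(s+1)) := by
      intro k hk; simp only [mem_Icc] at hk
      exact fmf_real n (s+1) k hk.1 (by omega)
    have hcard : ((n-s-1 + 1 - (s+1):ℕ):ℝ) ≤ ((n-s:ℕ):ℝ) := by exact_mod_cast by omega
    have hkey : fa (n-s) = ((n-s:ℕ):ℝ) * fa (n-s-1) := fa_mul (n-s) (by omega)
    calc ∑ k ∈ Icc (s+1) (n-s-1), fa k * fa (n-k)
        ≤ ∑ _k ∈ Icc (s+1) (n-s-1), fa (s+1) * fa (n-(s+1)) := Finset.sum_le_sum hb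
      _ = ((n-s-1 + 1 - (s+1):ℕ):ℝ) * (fa (s+1) * fa (n-(s+1))) := by
          rw [Finset.sum_const, Nat.card_Icc]; rw [nsmul_eq_mul]
      _ ≤ ((n-s:ℕ):ℝ) * (fa (s+1) * fa (n-(s+1))) := by
          apply mul_le_mul_of_nonneg_right hcard
          exact mul_nonneg (fa_pos _).le (fa_pos _).le
      _ = fa (s+1) * fa (n-s) := by
          rw [hkey, show n - (s+1) = n - s - 1 by omega]; ring
  have hlast : fa (n-s) * fa (n - (n-s)) = fa s * fa (n-s) := by
    rw [show n - (n-s) = s by omega]; ring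
  rw [hlast]
  nlinarith [fa_pos s, fa_pos (n-s), fa_pos (s+1)]

/-- reflection of a top block of a sum -/
lemma refl_sum (n r : ℕ) (h : 2*r ≤ n) (f : ℕ → ℝ) :
    ∑ k ∈ Ico (n-r) n, f k = ∑ j ∈ Icc 1 r, f (n-j) := by
  apply Finset.sum_nbij' (i := fun k => n - k) (j := fun j => n - j)
  · intro a ha; simp only [mem_Ico, mem_Icc] at *; omega
  · intro a ha; simp only [mem_Ico, mem_Icc] at *; omega
  · intro a ha; simp only [mem_Ico] at ha; omega
  · intro a ha; simp only [mem_Icc] at ha; omega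
  · intro a ha; simp only [mem_Ico] at ha; congr 1; omega

/-- the sigma swap used in the cancellation -/
lemma sigma_swap (r : ℕ) (F : ℕ → ℕ → ℝ) :
    ∑ j ∈ Icc 1 r, ∑ i ∈ range (r+1-j), F j i
      = ∑ k ∈ Icc 1 r, ∑ i ∈ range k, F (k-i) i := by
  rw [Finset.sum_sigma', Finset.sum_sigma']
  apply Finset.sum_nbij' (i := fun p => ⟨p.1 + p.2, p.2⟩) (j := fun p => ⟨p.1 - p.2, p.2⟩)
  · rintro ⟨j, i⟩ h; simp only [mem_sigma, mem_Icc, mem_range] at *; omega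
  · rintro ⟨k, i⟩ h; simp only [mem_sigma, mem_Icc, mem_range] at *; omega
  · rintro ⟨j, i⟩ h; simp only [mem_sigma, mem_Icc, mem_range] at h
    exact congrArg (fun t => (⟨t, i⟩ : (_ : ℕ) × ℕ)) (by omega : j + i - i = j)
  · rintro ⟨k, i⟩ h; simp only [mem_sigma, mem_Icc, mem_range] at h
    exact congrArg (fun t => (⟨t, i⟩ : (_ : ℕ) × ℕ)) (by omega : k - i + i = k)
  · rintro ⟨j, i⟩ h; simp only [mem_sigma, mem_Icc, mem_range] at h
    rw [show j + i - i = j by omega]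

/-- descFactorial lower bound: `n^k ≤ 2^k (n)_k` for `2k ≤ n`. -/
lemma descFac_lb : ∀ (k n : ℕ), 2*k ≤ n → (n:ℝ)^k ≤ 2^k * (n.descFactorial k : ℝ) := by
  intro k
  induction k with
  | zero => intro n _; simp
  | succ k ih =>
    intro n hn
    have h1 := ih n (by omega)
    rw [Nat.descFactorial_succ]
    have h2 : (n:ℝ) ≤ 2 * ((n - k : ℕ):ℝ) := by
      have : (n:ℕ) ≤ 2 * (n - k) := by omega
      exact_mod_cast this
    have hd : (0:ℝ) ≤ (n.descFactorial k : ℝ) := by positivity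
    have hnn : (0:ℝ) ≤ (n:ℝ)^k := by positivity
    push_cast
    calc (n:ℝ)^(k+1) = (n:ℝ) * (n:ℝ)^k := by ring
      _ ≤ (2 * ((n-k:ℕ):ℝ)) * (2^k * (n.descFactorial k : ℝ)) := by
          apply mul_le_mul h2 h1 hnn (by positivity)
      _ = 2^(k+1) * (((n-k:ℕ):ℝ) * (n.descFactorial k:ℝ)) := by ring

lemma step (r : ℕ) (w d e : ℕ → ℝ) (Cd : ℝ)
    (hCd : ∀ k : ℕ, |d k| ≤ Cd * fa k)
    (h1 : ∀ n : ℕ, 1 ≤ n → (n:ℝ) * w n = ∑ k ∈ range n, d k * (((n-k:ℕ):ℝ) * fa (n-k)))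
    (h2 : ∀ k : ℕ, 1 ≤ k → (k:ℝ) * d k = ∑ i ∈ range k, e i * (((k-i:ℕ):ℝ) * fa (k-i)))
    (hρ : ∀ j : ℕ, 1 ≤ j → j ≤ r →
      (fun n => d (n-j) - ∑ i ∈ range (r+1-j), e i * fa (n-j-i)) =O[atTop]
        (fun n => fa (n-(r+1)))) :
    (fun n => w n - ∑ k ∈ range (r+1), d k * fa (n-k)) =O[atTop]
      (fun n => fa (n-(r+1))) := by
  have hCd0 : 0 ≤ Cd := by
    have := hCd 0; have := abs_nonneg (d 0); rw [fa_zero] at *; linarith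
  -- the three pieces
  set M1 : ℕ → ℝ := fun n => ∑ k ∈ Icc (r+1) (n-(r+1)), d k * fa (n-k) with hM1def
  set M2 : ℕ → ℝ := fun n => ∑ k ∈ Icc (r+1) (n-(r+1)), (k:ℝ) * (d k * fa (n-k)) with hM2def
  set Tρ : ℕ → ℝ := fun n => ∑ j ∈ Icc 1 r,
      ((j:ℝ) * fa j) * (d (n-j) - ∑ i ∈ range (r+1-j), e i * fa (n-j-i)) with hTdef
  -- the key exact identity
  have key : ∀ n, 2*r+4 ≤ n →
      (n:ℝ) * (w n - ∑ k ∈ range (r+1), d k * fa (n-k))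
        = (n:ℝ) * M1 n - M2 n + Tρ n := by
    intro n hn
    have hsplit : ∀ f : ℕ → ℝ, ∑ k ∈ range n, f k
        = (∑ k ∈ range (r+1), f k + ∑ k ∈ Icc (r+1) (n-(r+1)), f k)
          + ∑ j ∈ Icc 1 r, f (n-j) := by
      intro f
      have e1 : ∑ k ∈ Ico 0 (r+1), f k + ∑ k ∈ Ico (r+1) (n-r), f k
          = ∑ k ∈ Ico 0 (n-r), f k :=
        Finset.sum_Ico_consecutive f (by omega) (by omega)
      have e2 : ∑ k ∈ Ico 0 (n-r), f k + ∑ k ∈ Ico (n-r) n, f k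
          = ∑ k ∈ Ico 0 n, f k :=
        Finset.sum_Ico_consecutive f (by omega) (by omega)
      have e3 : Ico (r+1) (n-r) = Icc (r+1) (n-(r+1)) := by
        rw [show n-r = (n-(r+1))+1 by omega, Finset.Ico_add_one_right_eq_Icc]
      have e4 : ∑ k ∈ Ico (n-r) n, f k = ∑ j ∈ Icc 1 r, f (n-j) :=
        refl_sum n r (by omega) f
      rw [range_eq_Ico, ← e2, ← e1, e3, e4, range_eq_Ico]
    have hw := h1 n (by omega)
    have hcast : ∀ k ∈ range n, d k * (((n-k:ℕ):ℝ) * fa (n-k))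
        = (n:ℝ) * (d k * fa (n-k)) - (k:ℝ) * (d k * fa (n-k)) := by
      intro k hk; simp only [mem_range] at hk
      rw [Nat.cast_sub hk.le]; ring
    rw [Finset.sum_congr rfl hcast, Finset.sum_sub_distrib] at hw
    rw [hsplit (fun k => (n:ℝ) * (d k * fa (n-k))),
        hsplit (fun k => (k:ℝ) * (d k * fa (n-k)))] at hw
    -- clean top blocks
    have top1 : ∑ j ∈ Icc 1 r, (n:ℝ) * (d (n-j) * fa (n-(n-j)))
        = ∑ j ∈ Icc 1 r, (n:ℝ) * (d (n-j) * fa j) := by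
      apply Finset.sum_congr rfl; intro j hj; simp only [mem_Icc] at hj
      rw [show n-(n-j) = j by omega]
    have top2 : ∑ j ∈ Icc 1 r, ((n-j:ℕ):ℝ) * (d (n-j) * fa (n-(n-j)))
        = ∑ j ∈ Icc 1 r, ((n:ℝ) - (j:ℝ)) * (d (n-j) * fa j) := by
      apply Finset.sum_congr rfl; intro j hj; simp only [mem_Icc] at hj
      rw [show n-(n-j) = j by omega, Nat.cast_sub (by omega : j ≤ n)]
    have bot2 : ∑ k ∈ range (r+1), (k:ℝ) * (d k * fa (n-k))
        = ∑ k ∈ Icc 1 r, (k:ℝ) * (d k * fa (n-k)) := by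
      rw [range_eq_Ico, Finset.sum_eq_sum_Ico_succ_bot (by omega : 0 < r+1)]
      rw [Finset.Ico_add_one_right_eq_Icc]; simp
    -- first sums pulled together
    have hsum1 : ∑ k ∈ range (r+1), (n:ℝ) * (d k * fa (n-k))
        = (n:ℝ) * ∑ k ∈ range (r+1), d k * fa (n-k) := by rw [Finset.mul_sum]
    -- cancellation identity
    have hE : ∑ j ∈ Icc 1 r, ((j:ℝ) * fa j) * (∑ i ∈ range (r+1-j), e i * fa (n-j-i))
        = ∑ k ∈ Icc 1 r, (k:ℝ) * (d k * fa (n-k)) := by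
      have lhs1 : ∀ j ∈ Icc 1 r, ((j:ℝ) * fa j) * (∑ i ∈ range (r+1-j), e i * fa (n-j-i))
          = ∑ i ∈ range (r+1-j), ((j:ℝ) * fa j) * (e i * fa (n-j-i)) := by
        intro j hj; rw [Finset.mul_sum]
      rw [Finset.sum_congr rfl lhs1]
      have := sigma_swap r (fun j i => ((j:ℝ) * fa j) * (e i * fa (n-j-i)))
      rw [this]
      apply Finset.sum_congr rfl; intro k hk; simp only [mem_Icc] at hk
      have inner : ∀ i ∈ range k, (((k-i:ℕ):ℝ) * fa (k-i)) * (e i * fa (n-(k-i)-i))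
          = (e i * (((k-i:ℕ):ℝ) * fa (k-i))) * fa (n-k) := by
        intro i hi; simp only [mem_range] at hi
        rw [show n-(k-i)-i = n-k by omega]; ring
      rw [Finset.sum_congr rfl inner, ← Finset.sum_mul, ← h2 k (by omega)]; ring
    -- the Tρ expansion
    have hTρ : Tρ n = ∑ j ∈ Icc 1 r, ((j:ℝ) * fa j) * d (n-j)
        - ∑ k ∈ Icc 1 r, (k:ℝ) * (d k * fa (n-k)) := by
      rw [hTdef, ← hE, ← Finset.sum_sub_distrib]
      apply Finset.sum_congr rfl; intro j hj; ring
    -- assemble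
    have htop : ∑ j ∈ Icc 1 r, (n:ℝ) * (d (n-j) * fa j)
        - ∑ j ∈ Icc 1 r, ((n:ℝ) - (j:ℝ)) * (d (n-j) * fa j)
        = ∑ j ∈ Icc 1 r, ((j:ℝ) * fa j) * d (n-j) := by
      rw [← Finset.sum_sub_distrib]
      apply Finset.sum_congr rfl; intro j hj; ring
    rw [top1, top2, bot2, hsum1] at hw
    rw [hM1def, hM2def]
    have goal_eq : (n:ℝ) * w n - (n:ℝ) * ∑ k ∈ range (r+1), d k * fa (n-k)
        = (n:ℝ) * M1 n - M2 n + Tρ n := by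
      rw [hTρ, hM1def, hM2def]
      have hsum2 : ∑ k ∈ Icc (r+1) (n-(r+1)), (n:ℝ) * (d k * fa (n-k))
          = (n:ℝ) * ∑ k ∈ Icc (r+1) (n-(r+1)), d k * fa (n-k) := by
        rw [Finset.mul_sum]
      simp only at hw ⊢
      linarith [hw, htop, hsum2]
    rw [mul_sub]; exact goal_eq
  -- O-bounds
  have hM1O : M1 =O[atTop] (fun n => fa (n-(r+1))) := by
    rw [isBigO_iff]
    refine ⟨Cd * (2 * fa (r+1) + fa (r+2)), ?_⟩
    filter_upwards [eventually_ge_atTop (2*r+4)] with n hn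
    simp only [Real.norm_eq_abs]
    have habs : |M1 n| ≤ ∑ k ∈ Icc (r+1) (n-(r+1)), |d k| * fa (n-k) := by
      refine (Finset.abs_sum_le_sum_abs _ _).trans ?_
      apply Finset.sum_le_sum; intro k hk
      rw [abs_mul, abs_of_pos (fa_pos _)]
    have hsum : ∑ k ∈ Icc (r+1) (n-(r+1)), |d k| * fa (n-k)
        ≤ Cd * ∑ k ∈ Icc (r+1) (n-(r+1)), fa k * fa (n-k) := by
      rw [Finset.mul_sum]; apply Finset.sum_le_sum; intro k hk
      have := hCd k
      have := (fa_pos (n-k)).le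
      nlinarith [fa_pos (n-k)]
    have hg := garg (r+1) n (by omega) (by omega)
    rw [abs_of_pos (fa_pos _)]
    calc |M1 n| ≤ Cd * ∑ k ∈ Icc (r+1) (n-(r+1)), fa k * fa (n-k) := habs.trans hsum
      _ ≤ Cd * ((2 * fa (r+1) + fa (r+1+1)) * fa (n-(r+1))) := by
          apply mul_le_mul_of_nonneg_left hg hCd0
      _ = Cd * (2 * fa (r+1) + fa (r+2)) * fa (n-(r+1)) := by ring_nf
  have hM2O : M2 =O[atTop] (fun n : ℕ => (n:ℝ) * fa (n-(r+1))) := by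
    rw [isBigO_iff]
    refine ⟨Cd * (2 * fa (r+1) + fa (r+2)), ?_⟩
    filter_upwards [eventually_ge_atTop (2*r+4)] with n hn
    simp only [Real.norm_eq_abs]
    have habs : |M2 n| ≤ ∑ k ∈ Icc (r+1) (n-(r+1)), (n:ℝ) * (|d k| * fa (n-k)) := by
      refine (Finset.abs_sum_le_sum_abs _ _).trans ?_
      apply Finset.sum_le_sum; intro k hk
      simp only [mem_Icc] at hk
      rw [abs_mul, abs_mul, abs_of_pos (fa_pos _), Nat.abs_cast]
      have hkn : (k:ℝ) ≤ (n:ℝ) := by exact_mod_cast by omega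
      exact mul_le_mul_of_nonneg_right hkn (mul_nonneg (abs_nonneg _) (fa_pos _).le)
    have hsum : ∑ k ∈ Icc (r+1) (n-(r+1)), (n:ℝ) * (|d k| * fa (n-k))
        ≤ (n:ℝ) * (Cd * ∑ k ∈ Icc (r+1) (n-(r+1)), fa k * fa (n-k)) := by
      rw [Finset.mul_sum, Finset.mul_sum]
      apply Finset.sum_le_sum; intro k hk
      have h3 := hCd k
      have hn0 : (0:ℝ) ≤ (n:ℝ) := by positivity
      nlinarith [mul_le_mul_of_nonneg_right h3 (fa_pos (n-k)).le, fa_pos (n-k), hn0]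
    have hg := garg (r+1) n (by omega) (by omega)
    have hn0 : (0:ℝ) ≤ (n:ℝ) := by positivity
    rw [abs_mul, Nat.abs_cast, abs_of_pos (fa_pos _)]
    calc |M2 n| ≤ (n:ℝ) * (Cd * ∑ k ∈ Icc (r+1) (n-(r+1)), fa k * fa (n-k)) :=
          habs.trans hsum
      _ ≤ (n:ℝ) * (Cd * ((2 * fa (r+1) + fa (r+1+1)) * fa (n-(r+1)))) := by
          apply mul_le_mul_of_nonneg_left _ hn0
          apply mul_le_mul_of_nonneg_left hg hCd0
      _ = Cd * (2 * fa (r+1) + fa (r+2)) * ((n:ℝ) * fa (n-(r+1))) := by ring_nf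
  have hTρO : Tρ =O[atTop] (fun n => fa (n-(r+1))) := by
    rw [hTdef]
    apply Asymptotics.IsBigO.fun_sum
    intro j hj; simp only [mem_Icc] at hj
    exact (hρ j hj.1 hj.2).const_mul_left _
  have hfan : (fun n : ℕ => fa (n-(r+1))) =O[atTop] (fun n : ℕ => (n:ℝ) * fa (n-(r+1))) := by
    rw [isBigO_iff]
    refine ⟨1, ?_⟩
    filter_upwards [eventually_ge_atTop 1] with n hn
    simp only [Real.norm_eq_abs]
    have h1n : (1:ℝ) ≤ (n:ℝ) := by exact_mod_cast hn
    rw [abs_of_pos (fa_pos _), abs_mul, Nat.abs_cast, abs_of_pos (fa_pos _), one_mul]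
    nlinarith [fa_pos (n-(r+1))]
  have h5 : (fun n : ℕ => (n:ℝ) * (w n - ∑ k ∈ range (r+1), d k * fa (n-k)))
      =O[atTop] (fun n : ℕ => (n:ℝ) * fa (n-(r+1))) := by
    have hc : (fun n : ℕ => (n:ℝ) * M1 n - M2 n + Tρ n)
        =O[atTop] (fun n : ℕ => (n:ℝ) * fa (n-(r+1))) :=
      (((isBigO_refl (fun n : ℕ => (n:ℝ)) atTop).mul hM1O).sub hM2O).add (hTρO.trans hfan)
    apply hc.congr' _ (EventuallyEq.refl _ _)
    filter_upwards [eventually_ge_atTop (2*r+4)] with n hn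
    exact (key n hn).symm
  -- divide by n
  rw [isBigO_iff] at h5 ⊢
  obtain ⟨c, hc⟩ := h5
  refine ⟨c, ?_⟩
  filter_upwards [hc, eventually_ge_atTop 1] with n h hn
  simp only [Real.norm_eq_abs] at h ⊢
  have hn0 : (0:ℝ) < (n:ℝ) := by exact_mod_cast by omega
  rw [abs_mul, Nat.abs_cast] at h
  rw [abs_mul, Nat.abs_cast] at h
  have h' : (n:ℝ) * |w n - ∑ k ∈ range (r+1), d k * fa (n-k)|
      ≤ (n:ℝ) * (c * |fa (n-(r+1))|) := by linarith
  have := (mul_le_mul_iff_right₀ hn0).mp h'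
  linarith

lemma coeff_pow_eq_zero {C : ℝ⟦X⟧} (hC : constantCoeff C = 0) {i l : ℕ} (h : i < l) :
    coeff i (C ^ l) = 0 := by
  have hdvd : (X : ℝ⟦X⟧) ^ l ∣ C ^ l := pow_dvd_pow_of_dvd (X_dvd_iff.mpr hC) l
  exact X_pow_dvd_iff.mp hdvd i h

lemma expPS_deriv (C : ℝ⟦X⟧) (hC : constantCoeff C = 0) :
    d⁄dX ℝ (expPS C) = d⁄dX ℝ C * expPS C := by
  ext m
  rw [PowerSeries.coeff_derivative]
  rw [show (coeff (m+1)) (expPS C) = ∑ k ∈ range (m+2), coeff (m+1) (C^k) / (Nat.factorial k : ℝ)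
    from by rw [expPS, PowerSeries.coeff_mk]]
  rw [Finset.sum_mul]
  have hterm : ∀ k ∈ range (m+2), coeff (m+1) (C^k) / (Nat.factorial k : ℝ) * ((m:ℝ)+1)
      = ((k:ℝ) * coeff m (C^(k-1) * d⁄dX ℝ C)) / (Nat.factorial k : ℝ) := by
    intro k _
    have hd : coeff m (d⁄dX ℝ (C^k)) = coeff (m+1) (C^k) * ((m:ℝ)+1) := by
      rw [PowerSeries.coeff_derivative]
    have hl : coeff m (d⁄dX ℝ (C^k)) = (k:ℝ) * coeff m (C^(k-1) * d⁄dX ℝ C) := by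
      rw [Derivation.leibniz_pow, map_nsmul, smul_eq_mul, nsmul_eq_mul]
    rw [div_mul_eq_mul_div, ← hd, hl]
  rw [Finset.sum_congr rfl hterm, Finset.sum_range_succ']
  simp only [Nat.cast_zero, zero_mul, zero_div, add_zero, Nat.add_sub_cancel]
  have hterm2 : ∀ l ∈ range (m+1),
      (((l:ℝ)+1) * coeff m (C^l * d⁄dX ℝ C)) / (Nat.factorial (l+1) : ℝ)
      = coeff m (C^l * d⁄dX ℝ C) / (Nat.factorial l : ℝ) := by
    intro l _
    rw [Nat.factorial_succ]
    have h1 : ((l:ℝ)+1) ≠ 0 := by positivity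
    have h2 : (Nat.factorial l : ℝ) ≠ 0 := by exact_mod_cast Nat.factorial_ne_zero l
    field_simp
    push_cast
    ring
  rw [show ∀ x : ℕ → ℝ, (∑ l ∈ range (m+1), x l) = ∑ l ∈ range (m+1), x l from fun _ => rfl]
  have : ∑ l ∈ range (m+1), ((((l:ℕ):ℝ)+1) * coeff m (C^l * d⁄dX ℝ C)) / (Nat.factorial (l+1) : ℝ)
      = ∑ l ∈ range (m+1), coeff m (C^l * d⁄dX ℝ C) / (Nat.factorial l : ℝ) :=
    Finset.sum_congr rfl hterm2
  push_cast at this ⊢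
  rw [this]
  -- now expand coeff of products and swap
  have hlhs : ∑ l ∈ range (m+1), coeff m (C^l * d⁄dX ℝ C) / (Nat.factorial l : ℝ)
      = ∑ p ∈ Finset.HasAntidiagonal.antidiagonal m, (∑ l ∈ range (m+1), coeff p.1 (C^l) / (Nat.factorial l : ℝ))
          * coeff p.2 (d⁄dX ℝ C) := by
    have h1 : ∀ l ∈ range (m+1), coeff m (C^l * d⁄dX ℝ C) / (Nat.factorial l : ℝ)
        = ∑ p ∈ Finset.HasAntidiagonal.antidiagonal m, (coeff p.1 (C^l) / (Nat.factorial l : ℝ)) * coeff p.2 (d⁄dX ℝ C) := by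
      intro l _
      rw [PowerSeries.coeff_mul, Finset.sum_div]
      apply Finset.sum_congr rfl; intro p _; ring
    rw [Finset.sum_congr rfl h1, Finset.sum_comm]
    apply Finset.sum_congr rfl; intro p _
    rw [Finset.sum_mul]
  rw [hlhs, mul_comm ((d⁄dX ℝ) C) (expPS C), PowerSeries.coeff_mul]
  apply Finset.sum_congr rfl
  intro p hp
  have hp1 : p.1 ≤ m := by
    have := Finset.HasAntidiagonal.antidiagonal.fst_le hp
    omega
  have hinner : ∑ l ∈ range (m+1), coeff p.1 (C^l) / (Nat.factorial l : ℝ)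
      = coeff p.1 (expPS C) := by
    rw [expPS, PowerSeries.coeff_mk]
    symm
    apply Finset.sum_subset
    · intro x hx; simp only [mem_range] at *; omega
    · intro x _ hx; simp only [mem_range] at hx
      rw [coeff_pow_eq_zero hC (by omega)]
      simp
  rw [hinner]

/-- from a derivative identity `F' = A' * G` extract the coefficient identity. -/
lemma deriv_to_coeff (F G : ℝ⟦X⟧)
    (h : d⁄dX ℝ F = d⁄dX ℝ (PowerSeries.mk fun i => fa i) * G) (n : ℕ) (hn : 1 ≤ n) :
    (n:ℝ) * coeff n F = ∑ k ∈ range n, coeff k G * (((n-k:ℕ):ℝ) * fa (n-k)) := by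
  have hc := congrArg (coeff (n-1)) h
  rw [PowerSeries.coeff_derivative, PowerSeries.coeff_mul] at hc
  have h1 : ∀ p ∈ Finset.HasAntidiagonal.antidiagonal (n-1),
      coeff p.1 (d⁄dX ℝ (PowerSeries.mk fun i => fa i)) * coeff p.2 G
      = (fa (p.1+1) * ((p.1:ℝ)+1)) * coeff p.2 G := by
    intro p _
    rw [PowerSeries.coeff_derivative, PowerSeries.coeff_mk]
  rw [Finset.sum_congr rfl h1] at hc
  rw [Finset.Nat.sum_antidiagonal_eq_sum_range_succ_mk] at hc
  have h2 : n - 1 + 1 = n := by omega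
  simp only [Nat.succ_eq_add_one, h2] at hc
  have h3 : ∑ i ∈ range n, fa (i+1) * ((i:ℝ)+1) * coeff (n-1-i) G
      = ∑ k ∈ range n, coeff k G * (((n-k:ℕ):ℝ) * fa (n-k)) := by
    rw [← Finset.sum_range_reflect (fun k => coeff k G * (((n-k:ℕ):ℝ) * fa (n-k))) n]
    apply Finset.sum_congr rfl
    intro i hi; simp only [mem_range] at hi
    have e1 : n - (n-1-i) = i + 1 := by omega
    rw [e1]
    have e2 : ((i+1:ℕ):ℝ) = (i:ℝ)+1 := by push_cast; ring
    rw [e2]; ring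
  rw [h3] at hc
  rw [← hc]
  have e4 : ((n-1:ℕ):ℝ) + 1 = (n:ℝ) := by
    have : ((n-1:ℕ):ℝ) = (n:ℝ) - 1 := by
      rw [Nat.cast_sub (by omega)]; norm_num
    rw [this]; ring
  rw [e4]; ring

lemma main (W : ℕ → ℕ → ℝ)
    (hbd : ∀ t k : ℕ, |W t k| ≤ 3^t * fa k)
    (hid : ∀ t n : ℕ, 1 ≤ n → (n:ℝ) * W t n
        = ∑ k ∈ range n, (-(t:ℝ) * W (t+1) k) * (((n-k:ℕ):ℝ) * fa (n-k))) :
    ∀ r t : ℕ, 1 ≤ t →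
      (fun n => W t n - ∑ k ∈ range (r+1), (-(t:ℝ) * W (t+1) k) * fa (n-k))
        =O[atTop] (fun n => fa (n-(r+1))) := by
  intro r
  induction r using Nat.strong_induction_on with
  | _ r IH =>
    intro t ht
    apply step r (W t) (fun k => -(t:ℝ) * W (t+1) k) (fun i => (t:ℝ)*((t:ℝ)+1) * W (t+2) i)
      ((t:ℝ) * 3^(t+1))
    · intro k
      rw [show -(t:ℝ) * W (t+1) k = -((t:ℝ) * W (t+1) k) by ring, abs_neg, abs_mul, Nat.abs_cast]
      calc (t:ℝ) * |W (t+1) k| ≤ (t:ℝ) * (3^(t+1) * fa k) :=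
            mul_le_mul_of_nonneg_left (hbd (t+1) k) (by positivity)
        _ = (t:ℝ)*3^(t+1) * fa k := by ring
    · exact hid t
    · intro k hk
      have h := hid (t+1) k hk
      calc (k:ℝ) * (-(t:ℝ) * W (t+1) k) = -(t:ℝ) * ((k:ℝ) * W (t+1) k) := by ring
        _ = -(t:ℝ) * ∑ i ∈ range k, (-((t+1:ℕ):ℝ) * W (t+1+1) i) * (((k-i:ℕ):ℝ) * fa (k-i)) := by
            rw [h]
        _ = ∑ i ∈ range k, ((t:ℝ)*((t:ℝ)+1) * W (t+2) i) * (((k-i:ℕ):ℝ) * fa (k-i)) := by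
            rw [Finset.mul_sum]; apply Finset.sum_congr rfl; intro i _; push_cast; ring
    · intro j hj1 hj2
      have hIH := IH (r-j) (by omega) (t+1) (by omega)
      have hcomp := hIH.comp_tendsto (tendsto_sub_atTop_nat j)
      have h2 := hcomp.const_mul_left (-(t:ℝ))
      apply h2.congr'
      · filter_upwards [eventually_ge_atTop (r+1)] with n hn
        simp only [Function.comp]
        rw [show r+1-j = r-j+1 by omega, mul_sub, Finset.mul_sum]
        congr 1
        apply Finset.sum_congr rfl; intro i _
        push_cast; ring
      · filter_upwards [eventually_ge_atTop (r+1)] with n hn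
        simp only [Function.comp]
        congr 1; omega

lemma logcase (W : ℕ → ℕ → ℝ) (b : ℕ → ℝ)
    (hbd : ∀ t k : ℕ, |W t k| ≤ 3^t * fa k)
    (hid : ∀ t n : ℕ, 1 ≤ n → (n:ℝ) * W t n
        = ∑ k ∈ range n, (-(t:ℝ) * W (t+1) k) * (((n-k:ℕ):ℝ) * fa (n-k)))
    (hlog : ∀ n : ℕ, 1 ≤ n → (n:ℝ) * b n
        = ∑ k ∈ range n, W 1 k * (((n-k:ℕ):ℝ) * fa (n-k))) :
    ∀ r : ℕ, (fun n => b n - ∑ k ∈ range (r+1), W 1 k * fa (n-k))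
        =O[atTop] (fun n => fa (n-(r+1))) := by
  intro r
  apply step r b (W 1) (fun i => -W 2 i) 3
  · intro k
    have := hbd 1 k
    calc |W 1 k| ≤ 3^1 * fa k := hbd 1 k
      _ = 3 * fa k := by norm_num
  · exact hlog
  · intro k hk
    have h := hid 1 k hk
    calc (k:ℝ) * W 1 k = ∑ i ∈ range k, (-((1:ℕ):ℝ) * W (1+1) i) * (((k-i:ℕ):ℝ) * fa (k-i)) := h
      _ = ∑ i ∈ range k, (-W 2 i) * (((k-i:ℕ):ℝ) * fa (k-i)) := by
          apply Finset.sum_congr rfl; intro i _; push_cast; ring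
  · intro j hj1 hj2
    have hIH := main W hbd hid (r-j) 1 le_rfl
    have hcomp := hIH.comp_tendsto (tendsto_sub_atTop_nat j)
    apply hcomp.congr'
    · filter_upwards [eventually_ge_atTop (r+1)] with n hn
      simp only [Function.comp]
      rw [show r+1-j = r-j+1 by omega]
      congr 1
      apply Finset.sum_congr rfl; intro i _
      push_cast; ring
    · filter_upwards [eventually_ge_atTop (r+1)] with n hn
      simp only [Function.comp]
      congr 1; omega

end OrigamiAux

open OrigamiAux PowerSeries in
/-- asymptotic probability that a random origami is connected. -/
theorem origami_connected
    (co ip : ℕ → ℝ) (hco0 : co 0 = 0) (hip0 : ip 0 = 0)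
    (hexp : (PowerSeries.mk fun n => ((Nat.factorial n : ℝ)) ^ 2 / (Nat.factorial n)) =
      expPS (PowerSeries.mk fun n => co n / (Nat.factorial n)))
    (hip : (PowerSeries.mk fun k => ip k) =
      1 - (PowerSeries.mk fun n => ((Nat.factorial n : ℝ)))⁻¹) :
    ∀ r : ℕ,
      (fun n => co n / ((Nat.factorial n : ℝ)) ^ 2 -
          (1 - ∑ k ∈ Finset.Icc 1 r, ip k / (n.descFactorial k : ℝ)))
        =O[atTop] fun n => 1 / (n : ℝ) ^ (r + 1) := by
  intro r
  set A : ℝ⟦X⟧ := PowerSeries.mk fun i => fa i with hA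
  have hfa_ne : ∀ n : ℕ, ((Nat.factorial n : ℝ)) ≠ 0 := fun n => by
    exact_mod_cast Nat.factorial_ne_zero n
  have hAfact : (PowerSeries.mk fun n => ((Nat.factorial n : ℝ))) = A := by
    rw [hA]; ext n; rw [PowerSeries.coeff_mk, PowerSeries.coeff_mk, fa_def]
  have hA2 : (PowerSeries.mk fun n => ((Nat.factorial n : ℝ))^2 / (Nat.factorial n : ℝ)) = A := by
    rw [hA]; ext n; rw [PowerSeries.coeff_mk, PowerSeries.coeff_mk, fa_def, sq,
      mul_div_assoc, div_self (hfa_ne n), mul_one]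
  have hA0 : constantCoeff A = 1 := by
    rw [hA]
    have : constantCoeff (PowerSeries.mk fun i => fa i) = fa 0 := by
      rw [← PowerSeries.coeff_zero_eq_constantCoeff_apply, PowerSeries.coeff_mk]
    rw [this, fa_zero]
  set V : ℝ⟦X⟧ := 1 - PowerSeries.mk fun k => ip k with hV
  have hVinv : V = A⁻¹ := by
    rw [hV, hip, hAfact, sub_sub_cancel]
  have hAV : A * V = 1 := by
    rw [hVinv]
    exact PowerSeries.mul_inv_cancel A (by rw [hA0]; exact one_ne_zero)
  -- coefficients of V
  have hv0 : coeff 0 V = 1 := by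
    rw [hV, map_sub, PowerSeries.coeff_mk, PowerSeries.coeff_zero_one, hip0, sub_zero]
  have hvk : ∀ k : ℕ, 1 ≤ k → coeff k V = -ip k := by
    intro k hk
    rw [hV, map_sub, PowerSeries.coeff_mk, PowerSeries.coeff_one, if_neg (by omega), zero_sub]
  -- recurrence for coefficients of V and the sign bound
  have hvrec : ∀ n : ℕ, 1 ≤ n →
      coeff n V = -(fa n) - ∑ i ∈ Ico 1 n, fa i * coeff (n-i) V := by
    intro n hn
    have h0 : coeff n (A * V) = 0 := by
      rw [hAV, PowerSeries.coeff_one, if_neg (by omega)]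
    rw [PowerSeries.coeff_mul, Finset.Nat.sum_antidiagonal_eq_sum_range_succ_mk] at h0
    have hsplit : ∑ i ∈ range (n+1), coeff i A * coeff (n-i) V
        = coeff 0 A * coeff n V +
          (∑ i ∈ Ico 1 n, coeff i A * coeff (n-i) V + coeff n A * coeff 0 V) := by
      rw [range_eq_Ico, Finset.sum_eq_sum_Ico_succ_bot (by omega : 0 < n+1)]
      rw [Finset.sum_Ico_succ_top (by omega : 1 ≤ n)]
      simp [Nat.sub_self]
    rw [hsplit] at h0
    have hcA : ∀ i : ℕ, coeff i A = fa i := fun i => by rw [hA, PowerSeries.coeff_mk]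
    simp only [hcA, fa_zero, one_mul, hv0, mul_one, Nat.sub_zero] at h0
    have : ∑ i ∈ Ico 1 n, coeff i A * coeff (n-i) V
        = ∑ i ∈ Ico 1 n, fa i * coeff (n-i) V := by
      apply Finset.sum_congr rfl; intro i _; rw [hcA]
    linarith [h0]
  have hvsign : ∀ n : ℕ, 1 ≤ n → -(fa n) ≤ coeff n V ∧ coeff n V ≤ 0 := by
    intro n
    induction n using Nat.strong_induction_on with
    | _ n IH =>
      intro hn
      have hrec := hvrec n hn
      have hsb : -(fa n) ≤ ∑ i ∈ Ico 1 n, fa i * coeff (n-i) V ∧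
          ∑ i ∈ Ico 1 n, fa i * coeff (n-i) V ≤ 0 := by
        constructor
        · have h1 : ∀ i ∈ Ico 1 n, -(fa i * fa (n-i)) ≤ fa i * coeff (n-i) V := by
            intro i hi; simp only [mem_Ico] at hi
            have := (IH (n-i) (by omega) (by omega)).1
            nlinarith [fa_pos i]
          have h2 := Finset.sum_le_sum h1
          rw [Finset.sum_neg_distrib] at h2
          have h3 : ∑ i ∈ Ico 1 n, fa i * fa (n-i) ≤ fa n := by
            have : Ico 1 n = Icc 1 (n-1) := by
              ext x; simp only [mem_Ico, mem_Icc]; omega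
            rw [this]; exact sumlem n
          linarith
        · apply Finset.sum_nonpos; intro i hi; simp only [mem_Ico] at hi
          have := (IH (n-i) (by omega) (by omega)).2
          nlinarith [fa_pos i]
      constructor
      · rw [hrec]; linarith [hsb.2, fa_pos n]
      · rw [hrec]; linarith [hsb.1]
  have hv : ∀ k : ℕ, |coeff k V| ≤ fa k := by
    intro k
    rcases Nat.eq_zero_or_pos k with h | h
    · subst h; rw [hv0, fa_zero]; norm_num
    · have := hvsign k h
      rw [abs_le]; constructor <;> linarith [this.1, this.2, fa_pos k]
  -- the W family
  set W : ℕ → ℕ → ℝ := fun t k => coeff k (V^t) with hW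
  have hbd : ∀ t k : ℕ, |W t k| ≤ 3^t * fa k := by
    intro t
    induction t with
    | zero =>
      intro k
      rw [hW]
      simp only [pow_zero, PowerSeries.coeff_one]
      rcases Nat.eq_zero_or_pos k with h | h
      · subst h; simp [fa_zero]
      · rw [if_neg (by omega)]; simp [le_of_lt (fa_pos k)]
    | succ t IHt =>
      intro k
      rw [hW]
      simp only [pow_succ]
      rw [PowerSeries.coeff_mul]
      calc |∑ p ∈ Finset.HasAntidiagonal.antidiagonal k, coeff p.1 (V^t) * coeff p.2 V|
          ≤ ∑ p ∈ Finset.HasAntidiagonal.antidiagonal k, |coeff p.1 (V^t) * coeff p.2 V| :=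
            Finset.abs_sum_le_sum_abs _ _
        _ ≤ ∑ p ∈ Finset.HasAntidiagonal.antidiagonal k, (3^t * fa p.1) * fa p.2 := by
            apply Finset.sum_le_sum; intro p _
            rw [abs_mul]
            apply mul_le_mul (IHt p.1) (hv p.2) (abs_nonneg _)
            exact mul_nonneg (by positivity) (fa_pos _).le
        _ = 3^t * ∑ p ∈ Finset.HasAntidiagonal.antidiagonal k, fa p.1 * fa p.2 := by
            rw [Finset.mul_sum]; apply Finset.sum_congr rfl; intro p _; ring
        _ ≤ 3^t * (3 * fa k) := by
            apply mul_le_mul_of_nonneg_left (conv3 k) (by positivity)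
        _ = 3^(t+1) * fa k := by ring
  -- derivative identities
  have hdAV : d⁄dX ℝ A * V + A * d⁄dX ℝ V = 0 := by
    have h0 : d⁄dX ℝ (A * V) = 0 := by rw [hAV]; exact Derivation.map_one_eq_zero _
    rw [Derivation.leibniz, smul_eq_mul, smul_eq_mul] at h0
    linear_combination h0
  have hV' : d⁄dX ℝ V = -(d⁄dX ℝ A * V^2) := by
    have h1 : d⁄dX ℝ V * (A * V) = d⁄dX ℝ V := by rw [hAV, mul_one]
    have h2 : A * d⁄dX ℝ V = -(d⁄dX ℝ A * V) := by linear_combination hdAV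
    calc d⁄dX ℝ V = d⁄dX ℝ V * (A * V) := h1.symm
      _ = (A * d⁄dX ℝ V) * V := by ring
      _ = -(d⁄dX ℝ A * V) * V := by rw [h2]
      _ = -(d⁄dX ℝ A * V^2) := by ring
  have hWd : ∀ t : ℕ, d⁄dX ℝ (V^t) = d⁄dX ℝ A * (PowerSeries.C (-(t:ℝ)) * V^(t+1)) := by
    intro t
    rcases Nat.eq_zero_or_pos t with h | h
    · subst h
      simp only [pow_zero, Nat.cast_zero, neg_zero, map_zero, zero_mul, mul_zero]
      exact Derivation.map_one_eq_zero _
    · rw [Derivation.leibniz_pow, hV']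
      have hpow : V^(t-1) * V^2 = V^(t+1) := by
        rw [← pow_add]; congr 1; omega
      rw [smul_eq_mul]
      have : (t : ℕ) • (V^(t-1) * -(d⁄dX ℝ A * V^2)) =
          (t:ℝ) • (V^(t-1) * -(d⁄dX ℝ A * V^2)) := by
        rw [nsmul_eq_mul, PowerSeries.smul_eq_C_mul, PowerSeries.C_eq_algebraMap]
        norm_num
      rw [this, PowerSeries.smul_eq_C_mul]
      calc PowerSeries.C (t:ℝ) * (V^(t-1) * -(d⁄dX ℝ A * V^2))
          = -(PowerSeries.C (t:ℝ)) * (d⁄dX ℝ A * (V^(t-1) * V^2)) := by ring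
        _ = d⁄dX ℝ A * (PowerSeries.C (-(t:ℝ)) * V^(t+1)) := by
            rw [hpow, map_neg]; ring
  have hid : ∀ t n : ℕ, 1 ≤ n → (n:ℝ) * W t n
      = ∑ k ∈ range n, (-(t:ℝ) * W (t+1) k) * (((n-k:ℕ):ℝ) * fa (n-k)) := by
    intro t n hn
    have := deriv_to_coeff (V^t) (PowerSeries.C (-(t:ℝ)) * V^(t+1)) (by rw [← hA]; exact hWd t) n hn
    rw [this]
    apply Finset.sum_congr rfl; intro k _
    rw [PowerSeries.coeff_C_mul, hW]
  -- the log side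
  set B : ℝ⟦X⟧ := PowerSeries.mk fun n => co n / (Nat.factorial n : ℝ) with hB
  have hB0 : constantCoeff B = 0 := by
    rw [hB]
    have : constantCoeff (PowerSeries.mk fun n => co n / (Nat.factorial n : ℝ))
        = co 0 / (Nat.factorial 0 : ℝ) := by
      rw [← PowerSeries.coeff_zero_eq_constantCoeff_apply, PowerSeries.coeff_mk]
    rw [this, hco0]; norm_num
  have hAB : A = expPS B := by rw [← hA2, hexp, hB]
  have hdAB : d⁄dX ℝ A = d⁄dX ℝ B * A := by
    rw [hAB]; exact expPS_deriv B hB0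
  have hBd : d⁄dX ℝ B = d⁄dX ℝ A * V := by
    calc d⁄dX ℝ B = d⁄dX ℝ B * (A * V) := by rw [hAV, mul_one]
      _ = (d⁄dX ℝ B * A) * V := by ring
      _ = d⁄dX ℝ A * V := by rw [← hdAB]
  set b : ℕ → ℝ := fun n => co n / (Nat.factorial n : ℝ) with hb
  have hlog : ∀ n : ℕ, 1 ≤ n → (n:ℝ) * b n
      = ∑ k ∈ range n, W 1 k * (((n-k:ℕ):ℝ) * fa (n-k)) := by
    intro n hn
    have h1 := deriv_to_coeff B V (by rw [← hA]; exact hBd) n hn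
    have h2 : coeff n B = b n := by rw [hB, PowerSeries.coeff_mk]
    rw [h2] at h1
    rw [h1]
    apply Finset.sum_congr rfl; intro k _
    simp only [hW, pow_one]
  have hL := logcase W b hbd hid hlog r
  -- conversion to the goal
  have hdiv : (fun n : ℕ => (b n - ∑ k ∈ range (r+1), W 1 k * fa (n-k)) * (fa n)⁻¹)
      =O[atTop] (fun n : ℕ => fa (n-(r+1)) * (fa n)⁻¹) :=
    hL.mul (isBigO_refl (fun n : ℕ => (fa n)⁻¹) atTop)
  have hdf : ∀ (n k : ℕ), k ≤ n → fa (n-k) * (fa n)⁻¹ = 1 / (n.descFactorial k : ℝ) := by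
    intro n k hkn
    have h1 : (Nat.factorial (n-k) : ℝ) * (n.descFactorial k : ℝ) = (Nat.factorial n : ℝ) := by
      exact_mod_cast congrArg (Nat.cast (R := ℝ)) (Nat.factorial_mul_descFactorial hkn)
    have h2 : (n.descFactorial k : ℝ) ≠ 0 := by
      have : n.descFactorial k ≠ 0 := by
        rw [Ne, Nat.descFactorial_eq_zero_iff_lt]; omega
      exact_mod_cast this
    rw [fa_def, fa_def]
    field_simp
    linarith [h1]
  have hEq1 : (fun n : ℕ => co n / ((Nat.factorial n : ℝ)) ^ 2 -
        (1 - ∑ k ∈ Finset.Icc 1 r, ip k / (n.descFactorial k : ℝ)))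
      =ᶠ[atTop] (fun n : ℕ => (b n - ∑ k ∈ range (r+1), W 1 k * fa (n-k)) * (fa n)⁻¹) := by
    filter_upwards [eventually_ge_atTop (r+1)] with n hn
    have hsplit : ∑ k ∈ range (r+1), W 1 k * fa (n-k)
        = W 1 0 * fa n + ∑ k ∈ Icc 1 r, W 1 k * fa (n-k) := by
      rw [range_eq_Ico, Finset.sum_eq_sum_Ico_succ_bot (by omega : 0 < r+1), Finset.Ico_add_one_right_eq_Icc]
      simp
    have hW10 : W 1 0 = 1 := by simp only [hW, pow_one]; exact hv0
    have hW1k : ∀ k, 1 ≤ k → W 1 k = -ip k := by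
      intro k hk; simp only [hW, pow_one]; exact hvk k hk
    rw [hsplit, hW10, one_mul, sub_mul, add_mul]
    have hfn : fa n * (fa n)⁻¹ = 1 := mul_inv_cancel₀ (fa_pos n).ne'
    have hbn : b n * (fa n)⁻¹ = co n / ((Nat.factorial n : ℝ))^2 := by
      rw [hb, fa_def, sq]
      field_simp
    have hsum2 : (∑ k ∈ Icc 1 r, W 1 k * fa (n-k)) * (fa n)⁻¹
        = -∑ k ∈ Icc 1 r, ip k / (n.descFactorial k : ℝ) := by
      rw [Finset.sum_mul, ← Finset.sum_neg_distrib]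
      apply Finset.sum_congr rfl; intro k hk; simp only [mem_Icc] at hk
      rw [hW1k k hk.1, mul_assoc, hdf n k (by omega)]
      field_simp
    rw [hbn, hfn, hsum2]
    ring
  have hEq2 : (fun n : ℕ => fa (n-(r+1)) * (fa n)⁻¹) =O[atTop]
      (fun n : ℕ => 1 / (n:ℝ)^(r+1)) := by
    rw [isBigO_iff]
    refine ⟨2^(r+1), ?_⟩
    filter_upwards [eventually_ge_atTop (2*(r+1)+2)] with n hn
    simp only [Real.norm_eq_abs]
    rw [hdf n (r+1) (by omega)]
    have hlb := descFac_lb (r+1) n (by omega)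
    have hdfpos : (0:ℝ) < (n.descFactorial (r+1) : ℝ) := by
      have : n.descFactorial (r+1) ≠ 0 := by
        rw [Ne, Nat.descFactorial_eq_zero_iff_lt]; omega
      have h9 : 0 < n.descFactorial (r+1) := Nat.pos_of_ne_zero this
      exact_mod_cast h9
    have hnpos : (0:ℝ) < (n:ℝ)^(r+1) := by
      have : (0:ℝ) < (n:ℝ) := by exact_mod_cast by omega
      positivity
    rw [abs_of_pos (by positivity), abs_of_pos (by positivity)]
    rw [div_le_iff₀ hdfpos] at *
    calc (1:ℝ) ≤ 2^(r+1) * (n.descFactorial (r+1):ℝ) / (n:ℝ)^(r+1) := by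
          rw [le_div_iff₀ hnpos]; linarith
      _ = 2^(r+1) * (1/(n:ℝ)^(r+1)) * (n.descFactorial (r+1):ℝ) := by ring
  exact (hdiv.congr' hEq1.symm (EventuallyEq.refl _ _)).trans hEq2
end

section
/- Define ccm_{2n} by the identity in ℝ[[X]]: Σ_{n≥0} (2n−1)!!·X^{2n} = exp(Σ_{n≥1} ccm_{2n} X^{2n}/(2n)!), and define im_{2k} by Σ_{k≥1} im_{2k} X^k = 1 − (Σ_{n≥0} (2n−1)!!·X^n)^{−1}. Then for every integer r ≥ 0, as n → ∞, ccm_{2n}/((2n)!·(2n−1)!!) = 1 − Σ_{k=1}^{r} im_{2k}·(2(n−k)−1)!!/(2n−1)!! + O((2(n−r−1)−1)!!/(2n−1)!!). -/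
open Filter Asymptotics Finset

namespace CMaux
open PowerSeries
noncomputable section

def aa (n : ℕ) : ℝ := (Nat.doubleFactorial (2*n - 1) : ℝ)

lemma aa_zero : aa 0 = 1 := by simp [aa]
lemma aa_one : aa 1 = 1 := by simp [aa, Nat.doubleFactorial]
lemma aa_succ (n : ℕ) : aa (n+1) = (2*(n:ℝ)+1) * aa n := by
  rcases n with _ | m
  · simp [aa_zero, aa_one]
  · show aa (m+2) = _
    have h1 : 2*(m+2) - 1 = (2*(m+1) - 1) + 2 := by omega
    have h2 : ((2*(m+1) - 1 : ℕ) : ℝ) + 2 = 2*((m:ℝ)+1)+1 := by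
      have : (2*(m+1) - 1 : ℕ) = 2*m+1 := by omega
      rw [this]; push_cast; ring
    rw [aa, aa, h1, Nat.doubleFactorial]
    push_cast [h2]
    nlinarith [h2]
lemma aa_pos (n : ℕ) : 0 < aa n := by
  have := Nat.doubleFactorial_pos (2*n-1)
  exact_mod_cast Nat.cast_pos.mpr this
lemma aa_ge_one (n : ℕ) : 1 ≤ aa n := by
  induction n with
  | zero => simp [aa_zero]
  | succ m ih => rw [aa_succ]; nlinarith [aa_pos m]
lemma aa_mono : Monotone aa := by
  apply monotone_nat_of_le_succ
  intro n; rw [aa_succ]; nlinarith [aa_pos n, aa_ge_one n]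

lemma sum_insert_le' (a : ℕ) (S : Finset ℕ) (f : ℕ → ℝ) (hf : ∀ k, 0 ≤ f k) :
    ∑ k ∈ insert a S, f k ≤ f a + ∑ k ∈ S, f k := by
  by_cases h : a ∈ S
  · rw [Finset.insert_eq_self.mpr h]; linarith [hf a]
  · rw [Finset.sum_insert h]

lemma step_lemma {j n : ℕ} (h : 2*(j+1) ≤ n + 1) :
    aa (j+1) * aa (n-(j+1)) ≤ aa j * aa (n-j) := by
  have hjn : j + 1 ≤ n := by omega
  have h1 : n - j = (n - (j+1)) + 1 := by omega
  rw [aa_succ, h1, aa_succ]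
  have h2 : (2*(j:ℝ)+1) ≤ 2*((n-(j+1) : ℕ):ℝ)+1 := by
    have : (2*j+1 : ℕ) ≤ 2*(n-(j+1))+1 := by omega
    exact_mod_cast this
  have key := mul_le_mul_of_nonneg_right h2
    (le_of_lt (mul_pos (aa_pos j) (aa_pos (n-(j+1)))))
  nlinarith [key]

lemma unimodal_half {n : ℕ} : ∀ k s, s ≤ k → 2*k ≤ n →
    aa k * aa (n-k) ≤ aa s * aa (n-s) := by
  intro k
  induction k with
  | zero =>
    intro s hs _
    have : s = 0 := Nat.le_zero.mp hs
    subst this; exact le_refl _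
  | succ j ih =>
    intro s hs h2k
    rcases Nat.eq_or_lt_of_le hs with rfl | hlt
    · exact le_refl _
    · have hsj : s ≤ j := by omega
      calc aa (j+1) * aa (n-(j+1)) ≤ aa j * aa (n-j) := step_lemma (by omega)
        _ ≤ aa s * aa (n-s) := ih s hsj (by omega)

lemma unimodal {n k s : ℕ} (hs : s ≤ k) (hk : k + s ≤ n) :
    aa k * aa (n-k) ≤ aa s * aa (n-s) := by
  rcases le_or_gt (2*k) n with h | h
  · exact unimodal_half k s hs h
  · have hkn : k ≤ n := by omega
    have h1 : n - (n-k) = k := by omega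
    have := unimodal_half (n := n) (n-k) s (by omega) (by omega)
    rw [h1] at this
    linarith [this]

lemma sum_bound (s : ℕ) (hs : 1 ≤ s) (n : ℕ) :
    ∑ k ∈ Icc s (n-s), aa k * aa (n-k) ≤ (2*aa s + 2*aa (s+1)) * aa (n-s) := by
  have pos : ∀ k, 0 ≤ aa k * aa (n-k) := fun k => le_of_lt (mul_pos (aa_pos _) (aa_pos _))
  rcases lt_or_ge n (2*s) with h | h
  · have : Icc s (n-s) = ∅ := by
      apply Finset.Icc_eq_empty; omega
    rw [this, Finset.sum_empty]
    have := aa_pos s; have := aa_pos (s+1); have := aa_pos (n-s)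
    nlinarith
  have hsub : Icc s (n-s) ⊆ insert s (insert (n-s) (Icc (s+1) (n-s-1))) := by
    intro k hk
    simp only [Finset.mem_Icc] at hk
    simp only [Finset.mem_insert, Finset.mem_Icc]
    omega
  calc ∑ k ∈ Icc s (n-s), aa k * aa (n-k)
      ≤ ∑ k ∈ insert s (insert (n-s) (Icc (s+1) (n-s-1))), aa k * aa (n-k) :=
        Finset.sum_le_sum_of_subset_of_nonneg hsub (fun k _ _ => pos k)
    _ ≤ aa s * aa (n-s) + ∑ k ∈ insert (n-s) (Icc (s+1) (n-s-1)), aa k * aa (n-k) :=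
        sum_insert_le' _ _ _ pos
    _ ≤ aa s * aa (n-s) + (aa (n-s) * aa (n-(n-s)) + ∑ k ∈ Icc (s+1) (n-s-1), aa k * aa (n-k)) := by
        have := sum_insert_le' (n-s) (Icc (s+1) (n-s-1)) _ pos
        linarith
    _ ≤ (2*aa s + 2*aa (s+1)) * aa (n-s) := by
        have h1 : n - (n-s) = s := by omega
        rw [h1]
        have hmid : ∑ k ∈ Icc (s+1) (n-s-1), aa k * aa (n-k)
            ≤ (n:ℝ) * (aa (s+1) * aa (n-(s+1))) := by
          calc ∑ k ∈ Icc (s+1) (n-s-1), aa k * aa (n-k)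
              ≤ ∑ _k ∈ Icc (s+1) (n-s-1), aa (s+1) * aa (n-(s+1)) := by
                apply Finset.sum_le_sum
                intro k hk
                simp only [Finset.mem_Icc] at hk
                exact unimodal (by omega) (by omega)
            _ = ((Icc (s+1) (n-s-1)).card : ℝ) * (aa (s+1) * aa (n-(s+1))) := by
                rw [Finset.sum_const, nsmul_eq_mul]
            _ ≤ (n:ℝ) * (aa (s+1) * aa (n-(s+1))) := by
                have hcard : ((Icc (s+1) (n-s-1)).card : ℝ) ≤ (n:ℝ) := by
                  have : (Icc (s+1) (n-s-1)).card ≤ n := by rw [Nat.card_Icc]; omega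
                  exact_mod_cast this
                exact mul_le_mul_of_nonneg_right hcard
                  (le_of_lt (mul_pos (aa_pos _) (aa_pos _)))
        have hstep : (n:ℝ) * aa (n-(s+1)) ≤ 2 * aa (n-s) := by
          have h2 : n - s = (n - (s+1)) + 1 := by omega
          rw [h2, aa_succ]
          have hge : (n:ℝ) ≤ 2*(2*((n-(s+1):ℕ):ℝ)+1) := by
            have : n ≤ 2*(2*(n-(s+1))+1) := by omega
            exact_mod_cast this
          nlinarith [aa_pos (n-(s+1))]
        have := aa_pos s; have := aa_pos (s+1); have := aa_pos (n-s); have := aa_pos (n-(s+1))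
        nlinarith

lemma coeff_pow_eq_zero {C : PowerSeries ℝ} (hC : constantCoeff C = 0)
    {m k : ℕ} (h : m < k) : coeff m (C ^ k) = 0 := by
  obtain ⟨D, rfl⟩ := (PowerSeries.X_dvd_iff).mpr hC
  rw [mul_pow, coeff_X_pow_mul']
  rw [if_neg (by omega)]

lemma coeff_expPS_eq (C : PowerSeries ℝ) (hC : constantCoeff C = 0) {j N : ℕ} (hj : j ≤ N) :
    coeff j (expPS C) = ∑ k ∈ range (N+1), (coeff j (C^k)) / (Nat.factorial k) := by
  rw [expPS, coeff_mk]
  apply Finset.sum_subset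
  · intro k hk; simp only [Finset.mem_range] at *; omega
  · intro k _ hk
    simp only [Finset.mem_range, not_lt] at hk
    rw [coeff_pow_eq_zero hC (by omega)]
    simp

lemma expPS_deriv (C : PowerSeries ℝ) (hC : constantCoeff C = 0) :
    d⁄dX ℝ (expPS C) = (d⁄dX ℝ C) * expPS C := by
  ext n
  have hA : ∀ k : ℕ, coeff (n+1) (C^(k+1)) * ((n:ℝ)+1)
      = ((k:ℝ)+1) * coeff n ((d⁄dX ℝ C) * C^k) := by
    intro k
    have h2 := Derivation.leibniz_pow (d⁄dX ℝ) (a := C) (k+1)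
    simp only [Nat.add_sub_cancel] at h2
    have h3 := congrArg (coeff n) h2
    rw [coeff_derivative, map_nsmul] at h3
    rw [smul_eq_mul, nsmul_eq_mul] at h3
    rw [show C^k * d⁄dX ℝ C = d⁄dX ℝ C * C^k from mul_comm _ _] at h3
    push_cast at h3 ⊢
    linarith [h3]
  -- LHS
  have hL : coeff n (d⁄dX ℝ (expPS C))
      = ∑ k ∈ range (n+1), coeff n ((d⁄dX ℝ C) * C^k) / (Nat.factorial k : ℝ) := by
    rw [coeff_derivative, expPS, coeff_mk, Finset.sum_mul, Finset.sum_range_succ']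
    have hz : coeff (n+1) (C^0) / (Nat.factorial 0 : ℝ) * ((n:ℝ)+1) = 0 := by
      rw [pow_zero, coeff_one]
      simp
    rw [hz, add_zero]
    apply Finset.sum_congr rfl
    intro k _
    have hfac : (Nat.factorial (k+1) : ℝ) = ((k:ℝ)+1) * (Nat.factorial k : ℝ) := by
      rw [Nat.factorial_succ]; push_cast; ring
    have hk1 : ((k:ℝ)+1) ≠ 0 := by positivity
    have hfk : (Nat.factorial k : ℝ) ≠ 0 := by
      exact_mod_cast Nat.factorial_ne_zero k
    rw [div_mul_eq_mul_div, hA k, hfac]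
    field_simp
  -- RHS
  have hR : coeff n ((d⁄dX ℝ C) * expPS C)
      = ∑ k ∈ range (n+1), coeff n ((d⁄dX ℝ C) * C^k) / (Nat.factorial k : ℝ) := by
    rw [coeff_mul]
    rw [Finset.Nat.sum_antidiagonal_eq_sum_range_succ
      (fun i j => coeff i (d⁄dX ℝ C) * coeff j (expPS C))]
    have h1 : ∀ i ∈ range (n+1),
        coeff i (d⁄dX ℝ C) * coeff (n-i) (expPS C)
        = ∑ k ∈ range (n+1), coeff i (d⁄dX ℝ C) * coeff (n-i) (C^k) / (Nat.factorial k : ℝ) := by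
      intro i _
      rw [coeff_expPS_eq C hC (show n-i ≤ n by omega), Finset.mul_sum]
      apply Finset.sum_congr rfl
      intro k _
      ring
    rw [Finset.sum_congr rfl h1, Finset.sum_comm]
    apply Finset.sum_congr rfl
    intro k _
    rw [coeff_mul, Finset.Nat.sum_antidiagonal_eq_sum_range_succ
      (fun i j => coeff i (d⁄dX ℝ C) * coeff j (C^k)), Finset.sum_div]
  rw [hL, hR]

lemma hconv (φ ψ : ℝ⟦X⟧) (n : ℕ) :
    coeff n (φ * ψ) = ∑ k ∈ range (n+1), coeff k φ * coeff (n-k) ψ := by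
  rw [coeff_mul]
  exact Finset.Nat.sum_antidiagonal_eq_sum_range_succ
    (fun i j => coeff i φ * coeff j ψ) n


lemma sum_range_eq_Icc (g : ℕ → ℝ) (n : ℕ) :
    ∑ k ∈ range (n+1), g k = g 0 + ∑ k ∈ Icc 1 n, g k := by
  rw [Finset.sum_range_succ']
  rw [show Finset.Icc 1 n = Finset.Ico 1 (n+1) from (Finset.Ico_add_one_right_eq_Icc 1 n).symm,
    Finset.sum_Ico_eq_sum_range]
  simp only [Nat.add_sub_cancel]
  rw [add_comm]
  congr 1
  apply Finset.sum_congr rfl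
  intro k _
  rw [Nat.add_comm 1 k]


lemma coeff_two_X2 (h : ℝ⟦X⟧) (n : ℕ) :
    coeff n (2 * X^2 * h : ℝ⟦X⟧) = if 2 ≤ n then 2 * coeff (n-2) h else 0 := by
  rw [show (2 * X^2 * h : ℝ⟦X⟧) = X^2 * h + X^2 * h by ring, map_add, coeff_X_pow_mul']
  split_ifs with hn
  · ring
  · simp

lemma coeff_X_mul' (h : ℝ⟦X⟧) (n : ℕ) :
    coeff n (X * h : ℝ⟦X⟧) = if 1 ≤ n then coeff (n-1) h else 0 := by
  rw [show (X * h : ℝ⟦X⟧) = X^1 * h by rw [pow_one], coeff_X_pow_mul']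


def ff : ℝ⟦X⟧ := PowerSeries.mk aa

lemma ff_ne : ff ≠ 0 := by
  intro h
  have : coeff 0 ff = 0 := by rw [h]; simp
  rw [ff, coeff_mk, aa_zero] at this
  norm_num at this


lemma ODE : ff = 1 + X * ff + 2 * X^2 * (d⁄dX ℝ ff) := by
  ext n
  rw [map_add, map_add, coeff_X_mul', coeff_two_X2]
  match n with
  | 0 =>
    simp [ff, coeff_mk, aa_zero]
  | 1 =>
    simp only [ff, coeff_mk, coeff_one]
    norm_num
    rw [aa_zero, show aa 1 = 1 by rw [show (1:ℕ) = 0+1 from rfl, aa_succ, aa_zero]; norm_num]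
  | (m+2) =>
    simp only [ff, coeff_mk, coeff_one]
    rw [if_neg (by omega), if_pos (by omega), if_pos (by omega)]
    rw [coeff_derivative]
    simp only [coeff_mk]
    have e1 : m+2-1 = m+1 := by omega
    have e2 : m+2-2 = m := by omega
    rw [e1, e2]
    rw [show m+2 = (m+1)+1 from rfl, aa_succ]
    push_cast
    ring

section BSec
variable (b : ℕ → ℝ)

def dd (k : ℕ) : ℝ := if k = 0 then 1 else -b k
def ee : ℕ → ℝ
  | 0 => 1
  | (k+1) => dd b (k+1) + (2*(k:ℝ)-1) * dd b k
def BB : ℝ⟦X⟧ := PowerSeries.mk b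
def uu : ℝ⟦X⟧ := 1 - BB b
def EE : ℝ⟦X⟧ := uu b + 2*X^2*(d⁄dX ℝ (uu b)) - X*(uu b)

lemma H1_of (hb0 : b 0 = 0) (huf : ff * (1 - BB b) = 1) :
    ∀ n, 1 ≤ n → aa n = ∑ k ∈ Icc 1 n, b k * aa (n-k) := by
  intro n hn
  have h := congrArg (coeff n) huf
  rw [mul_sub, mul_one, map_sub] at h
  have h1 : coeff n (ff * BB b) = ∑ k ∈ range (n+1), b k * aa (n-k) := by
    rw [mul_comm, hconv]
    simp only [ff, BB, coeff_mk]
  rw [h1, sum_range_eq_Icc (fun k => b k * aa (n-k)) n] at h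
  simp only [ff, coeff_mk, coeff_one] at h
  rw [if_neg (by omega), hb0] at h
  simp only [Nat.sub_zero, zero_mul] at h
  linarith [h]

lemma hu2 (huf : ff * (1 - BB b) = 1) :
    ff^2 * (d⁄dX ℝ (uu b)) = -(d⁄dX ℝ ff) := by
  have huf' : ff * uu b = 1 := huf
  have hdag : ff * (d⁄dX ℝ (uu b)) + uu b * (d⁄dX ℝ ff) = 0 := by
    have h := Derivation.leibniz (d⁄dX ℝ) ff (uu b)
    rw [huf'] at h
    rw [Derivation.map_one_eq_zero] at h
    rw [smul_eq_mul, smul_eq_mul] at h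
    exact h.symm
  linear_combination ff * hdag - (d⁄dX ℝ ff) * huf'

lemma hBE (huf : ff * (1 - BB b) = 1) :
    (d⁄dX ℝ ff) * EE b = d⁄dX ℝ (BB b) := by
  have huf' : ff * uu b = 1 := huf
  have hBu : d⁄dX ℝ (BB b) = -(d⁄dX ℝ (uu b)) := by
    have h : BB b = 1 - uu b := by rw [uu]; ring
    rw [h, map_sub, Derivation.map_one_eq_zero]
    ring
  apply mul_right_cancel₀ (pow_ne_zero 2 ff_ne)
  rw [hBu, EE]
  linear_combination ((d⁄dX ℝ ff) * ff - X * (d⁄dX ℝ ff) * ff) * huf'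
    + (2*X^2*(d⁄dX ℝ ff) + 1) * (hu2 b huf) + (d⁄dX ℝ ff) * ODE

lemma hcu (hb0 : b 0 = 0) (m : ℕ) : coeff m (uu b) = dd b m := by
  rw [uu, map_sub, coeff_one, BB, coeff_mk, dd]
  split_ifs with h
  · subst h; rw [hb0]; norm_num
  · ring

lemma coeff_EE (hb0 : b 0 = 0) (m : ℕ) : coeff m (EE b) = ee b m := by
  rw [EE, map_sub, map_add, coeff_two_X2, coeff_X_mul', hcu b hb0]
  match m with
  | 0 => simp [ee, dd]
  | (k+1) =>
    rw [show ee b (k+1) = dd b (k+1) + (2*(k:ℝ)-1) * dd b k from rfl]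
    match k with
    | 0 =>
      rw [if_neg (by omega), if_pos (by omega)]
      rw [hcu b hb0]
      norm_num
      ring
    | (j+1) =>
      rw [if_pos (by omega), if_pos (by omega)]
      rw [coeff_derivative]
      have e1 : j+1+1-2 = j := by omega
      have e2 : j+1+1-1 = j+1 := by omega
      rw [e1, e2, hcu b hb0]
      push_cast
      ring

theorem NI (hb0 : b 0 = 0) (huf : ff * (1 - BB b) = 1) :
    ∀ i : ℕ, 1 ≤ i → (i:ℝ) * b i = ∑ j ∈ Icc 1 i, (j:ℝ) * aa j * ee b (i-j) := by
  intro i hi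
  obtain ⟨m, rfl⟩ : ∃ m, i = m + 1 := ⟨i-1, by omega⟩
  have h := congrArg (coeff m) (hBE b huf)
  rw [hconv] at h
  have hL : ∑ k ∈ range (m+1), coeff k (d⁄dX ℝ ff) * coeff (m-k) (EE b)
      = ∑ k ∈ range (m+1), ((k:ℝ)+1) * aa (k+1) * ee b (m-k) := by
    apply Finset.sum_congr rfl
    intro k _
    rw [coeff_derivative, coeff_EE b hb0]
    simp only [ff, coeff_mk]
    ring
  have hR : coeff m (d⁄dX ℝ (BB b)) = b (m+1) * ((m:ℝ)+1) := by
    rw [coeff_derivative, BB, coeff_mk]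
  rw [hL, hR] at h
  have hIcc : ∑ j ∈ Icc 1 (m+1), (j:ℝ) * aa j * ee b (m+1-j)
      = ∑ k ∈ range (m+1), ((k:ℝ)+1) * aa (k+1) * ee b (m-k) := by
    rw [show Finset.Icc 1 (m+1) = Finset.Ico 1 (m+2) from (Finset.Ico_add_one_right_eq_Icc 1 (m+1)).symm,
      Finset.sum_Ico_eq_sum_range]
    have e3 : m + 2 - 1 = m + 1 := by omega
    rw [e3]
    apply Finset.sum_congr rfl
    intro k _
    have e4 : 1 + k = k + 1 := by omega
    have e5 : m + 1 - (k+1) = m - k := by omega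
    rw [e4, e5]
    push_cast
    ring
  rw [hIcc, h]
  push_cast
  ring

end BSec

def gg (c : ℕ → ℝ) : ℝ⟦X⟧ := PowerSeries.mk c

lemma hBB (b c : ℕ → ℝ) (huf : ff * (1 - BB b) = 1)
    (hdfc : d⁄dX ℝ ff = (d⁄dX ℝ (gg c)) * ff) :
    BB b = X + 2*X^2*(d⁄dX ℝ (gg c)) := by
  apply mul_right_cancel₀ ff_ne
  linear_combination (-1 : ℝ⟦X⟧) * huf + ODE + 2*X^2*hdfc

lemma Hbc_of (b c : ℕ → ℝ) (hBBc : BB b = X + 2*X^2*(d⁄dX ℝ (gg c))) :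
    ∀ m, 1 ≤ m → b (m+1) = 2*(m:ℝ) * c m := by
  intro m hm
  have h := congrArg (coeff (m+1)) hBBc
  rw [BB, coeff_mk, map_add, coeff_two_X2, if_pos (by omega), coeff_X, if_neg (by omega)] at h
  rw [coeff_derivative, gg, coeff_mk] at h
  have e1 : m+1-2+1 = m := by omega
  rw [e1] at h
  have e2 : ((m+1-2:ℕ):ℝ) = (m:ℝ) - 1 := by
    have : (m+1-2:ℕ) = m - 1 := by omega
    rw [this, Nat.cast_sub hm]
    norm_num
  rw [e2] at h
  rw [h]
  ring

lemma parity_sum (g : ℕ → ℝ) (n : ℕ) :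
    ∑ k ∈ range (2*n), g k = ∑ l ∈ range n, (g (2*l) + g (2*l+1)) := by
  induction n with
  | zero => simp
  | succ m ih =>
    have h1 : 2*(m+1) = (2*m + 1) + 1 := by omega
    rw [h1, Finset.sum_range_succ, Finset.sum_range_succ, ih, Finset.sum_range_succ]
    ring

section CSec
variable (ccm : ℕ → ℝ)

def cs (n : ℕ) : ℝ := ccm (2*n) / (Nat.factorial (2*n) : ℝ)
def F2 : ℝ⟦X⟧ := PowerSeries.mk fun m => if 2 ∣ m then aa (m/2) else 0
def C2 : ℝ⟦X⟧ := PowerSeries.mk fun m => ccm m / (Nat.factorial m : ℝ)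

lemma key1 (hccmodd : ∀ m, ¬ 2 ∣ m → ccm m = 0)
    (hder : d⁄dX ℝ F2 = (d⁄dX ℝ (C2 ccm)) * F2) : ∀ m : ℕ, 1 ≤ m →
    (m:ℝ) * aa m = ∑ j ∈ Icc 1 m, (j:ℝ) * cs ccm j * aa (m-j) := by
  intro m hm
  obtain ⟨n, rfl⟩ : ∃ n, m = n + 1 := ⟨m-1, by omega⟩
  have h := congrArg (coeff (2*n+1)) hder
  have hL : coeff (2*n+1) (d⁄dX ℝ F2) = aa (n+1) * (2*(n:ℝ)+2) := by
    rw [coeff_derivative, F2, coeff_mk]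
    rw [if_pos ⟨n+1, by omega⟩]
    have e1 : (2*n+1+1)/2 = n+1 := by omega
    rw [e1]
    push_cast
    ring
  have hR : coeff (2*n+1) ((d⁄dX ℝ (C2 ccm)) * F2)
      = ∑ l ∈ range (n+1), 2*((l:ℝ)+1) * cs ccm (l+1) * aa (n-l) := by
    rw [hconv]
    have e2 : 2*n+1+1 = 2*(n+1) := by omega
    rw [e2, parity_sum]
    apply Finset.sum_congr rfl
    intro l hl
    simp only [Finset.mem_range] at hl
    have hz : coeff (2*l) (d⁄dX ℝ (C2 ccm)) = 0 := by
      rw [coeff_derivative, C2, coeff_mk]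
      rw [hccmodd (2*l+1) (by omega)]
      simp
    have ho : coeff (2*l+1) (d⁄dX ℝ (C2 ccm)) = 2*((l:ℝ)+1) * cs ccm (l+1) := by
      rw [coeff_derivative, C2, coeff_mk]
      have e3 : 2*l+1+1 = 2*(l+1) := by omega
      rw [e3, cs]
      have hfne : (Nat.factorial (2*(l+1)) : ℝ) ≠ 0 := by
        exact_mod_cast Nat.factorial_ne_zero _
      field_simp
      push_cast; ring
    have hF : coeff (2*n+1-(2*l+1)) F2 = aa (n-l) := by
      rw [F2, coeff_mk]
      have e4 : 2*n+1-(2*l+1) = 2*(n-l) := by omega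
      rw [e4, if_pos ⟨n-l, by omega⟩]
      congr 1
      omega
    rw [hz, ho, hF, zero_mul, zero_add]
  rw [hL, hR] at h
  have hIcc : ∑ j ∈ Icc 1 (n+1), (j:ℝ) * cs ccm j * aa (n+1-j)
      = ∑ l ∈ range (n+1), ((l:ℝ)+1) * cs ccm (l+1) * aa (n-l) := by
    rw [show Finset.Icc 1 (n+1) = Finset.Ico 1 (n+2) from (Finset.Ico_add_one_right_eq_Icc 1 (n+1)).symm,
      Finset.sum_Ico_eq_sum_range]
    have e3 : n + 2 - 1 = n + 1 := by omega
    rw [e3]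
    apply Finset.sum_congr rfl
    intro l _
    have e4 : 1 + l = l + 1 := by omega
    have e5 : n + 1 - (l+1) = n - l := by omega
    rw [e4, e5]
    push_cast
    ring
  rw [hIcc]
  have hdbl : ∑ l ∈ range (n+1), 2*((l:ℝ)+1) * cs ccm (l+1) * aa (n-l)
      = 2 * ∑ l ∈ range (n+1), ((l:ℝ)+1) * cs ccm (l+1) * aa (n-l) := by
    rw [Finset.mul_sum]
    apply Finset.sum_congr rfl
    intro l _
    ring
  rw [hdbl] at h
  push_cast
  nlinarith [h]

lemma hdf (hccmodd : ∀ m, ¬ 2 ∣ m → ccm m = 0)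
    (hder : d⁄dX ℝ F2 = (d⁄dX ℝ (C2 ccm)) * F2) :
    d⁄dX ℝ ff = (d⁄dX ℝ (gg (cs ccm))) * ff := by
  ext m
  rw [show ff = PowerSeries.mk aa from rfl]
  rw [coeff_derivative, coeff_mk, hconv]
  have hL2 : ∑ k ∈ range (m+1),
        coeff k (d⁄dX ℝ (gg (cs ccm))) * coeff (m-k) (PowerSeries.mk aa)
      = ∑ k ∈ range (m+1), ((k:ℝ)+1) * cs ccm (k+1) * aa (m-k) := by
    apply Finset.sum_congr rfl
    intro k _
    rw [coeff_derivative, gg, coeff_mk, coeff_mk]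
    ring
  rw [hL2]
  have h := key1 ccm hccmodd hder (m+1) (by omega)
  have hIcc : ∑ j ∈ Icc 1 (m+1), (j:ℝ) * cs ccm j * aa (m+1-j)
      = ∑ k ∈ range (m+1), ((k:ℝ)+1) * cs ccm (k+1) * aa (m-k) := by
    rw [show Finset.Icc 1 (m+1) = Finset.Ico 1 (m+2) from (Finset.Ico_add_one_right_eq_Icc 1 (m+1)).symm,
      Finset.sum_Ico_eq_sum_range]
    have e3 : m + 2 - 1 = m + 1 := by omega
    rw [e3]
    apply Finset.sum_congr rfl
    intro l _
    have e4 : 1 + l = l + 1 := by omega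
    have e5 : m + 1 - (l+1) = m - l := by omega
    rw [e4, e5]
    push_cast
    ring
  rw [hIcc] at h
  rw [← h]
  push_cast
  ring

end CSec

lemma H1split (b : ℕ → ℝ) (H1 : ∀ n, 1 ≤ n → aa n = ∑ k ∈ Icc 1 n, b k * aa (n-k)) (n : ℕ) (hn : 1 ≤ n) :
    b n = aa n - ∑ k ∈ Icc 1 (n-1), b k * aa (n-k) := by
  have h := H1 n hn
  have hsplit : ∑ k ∈ Icc 1 n, b k * aa (n-k)
      = (∑ k ∈ Icc 1 (n-1), b k * aa (n-k)) + b n * aa (n-n) := by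
    have : n = (n-1) + 1 := by omega
    rw [this]
    rw [Finset.sum_Icc_succ_top (by omega)]
    simp [this.symm]
  rw [hsplit] at h
  simp only [Nat.sub_self, aa_zero, mul_one] at h
  linarith

lemma bK (b : ℕ → ℝ) (H1 : ∀ n, 1 ≤ n → aa n = ∑ k ∈ Icc 1 n, b k * aa (n-k)) : ∃ K : ℝ, 1 ≤ K ∧ ∀ n, |b n| ≤ K * aa n := by
  set M : ℝ := 2*aa 1 + 2*aa 2 with hM
  have hMpos : 0 < M := by have := aa_pos 1; have := aa_pos 2; positivity
  set N : ℕ := Nat.ceil M + 1 with hN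
  set K0 : ℝ := 1 + ∑ k ∈ range (N+1), |b k| with hK0
  have hK0ge : 1 ≤ K0 := by
    have : 0 ≤ ∑ k ∈ range (N+1), |b k| :=
      Finset.sum_nonneg (fun k _ => abs_nonneg _)
    simp [hK0]; linarith
  refine ⟨2*K0, by linarith, ?_⟩
  intro n
  induction n using Nat.strong_induction_on with
  | _ n ih =>
    rcases le_or_gt n N with hn | hn
    · have h1 : |b n| ≤ ∑ k ∈ range (N+1), |b k| :=
        Finset.single_le_sum (f := fun k => |b k|) (fun k _ => abs_nonneg _)
          (Finset.mem_range.mpr (by omega))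
      have := aa_ge_one n
      nlinarith
    · -- n > N
      have hn1 : 1 ≤ n := by omega
      have heq := H1split b H1 n hn1
      have habs : |b n| ≤ aa n + ∑ k ∈ Icc 1 (n-1), (2*K0) * (aa k * aa (n-k)) := by
        rw [heq]
        calc |aa n - ∑ k ∈ Icc 1 (n-1), b k * aa (n-k)|
            ≤ |aa n| + |∑ k ∈ Icc 1 (n-1), b k * aa (n-k)| := abs_sub _ _
          _ ≤ aa n + ∑ k ∈ Icc 1 (n-1), (2*K0) * (aa k * aa (n-k)) := by
              gcongr
              · rw [abs_of_pos (aa_pos n)]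
              · calc |∑ k ∈ Icc 1 (n-1), b k * aa (n-k)|
                    ≤ ∑ k ∈ Icc 1 (n-1), |b k * aa (n-k)| := Finset.abs_sum_le_sum_abs _ _
                  _ ≤ ∑ k ∈ Icc 1 (n-1), (2*K0) * (aa k * aa (n-k)) := by
                      apply Finset.sum_le_sum
                      intro k hk
                      simp only [Finset.mem_Icc] at hk
                      rw [abs_mul, abs_of_pos (aa_pos (n-k))]
                      have hbk := ih k (by omega)
                      have := aa_pos (n-k)
                      nlinarith
      have hsum : ∑ k ∈ Icc 1 (n-1), (2*K0) * (aa k * aa (n-k))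
          ≤ (2*K0) * (M * aa (n-1)) := by
        rw [← Finset.mul_sum]
        have h := sum_bound 1 (le_refl 1) n
        norm_num at h
        have : (0:ℝ) ≤ 2*K0 := by linarith
        calc (2*K0) * ∑ k ∈ Icc 1 (n-1), aa k * aa (n-k)
            ≤ (2*K0) * ((2*aa 1 + 2*aa 2) * aa (n-1)) :=
              mul_le_mul_of_nonneg_left h this
          _ = (2*K0) * (M * aa (n-1)) := by rw [hM]
      have hMn : 2 * (M * aa (n-1)) ≤ aa n := by
        have h3 : n = (n-1)+1 := by omega
        have haan : aa n = (2*((n-1:ℕ):ℝ)+1) * aa (n-1) := by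
          conv_lhs => rw [h3]
          rw [aa_succ]
        rw [haan]
        have h4 : M ≤ ((n:ℝ) - 1) - 1/2 := by
          have h5 : M ≤ (Nat.ceil M : ℝ) := Nat.le_ceil M
          have h6 : ((Nat.ceil M : ℕ) : ℝ) ≤ (n:ℝ) - 2 := by
            have : (Nat.ceil M) + 2 ≤ n := by omega
            have := (Nat.cast_le (α := ℝ)).mpr this
            push_cast at this
            linarith
          linarith
        have h7 : ((n-1:ℕ):ℝ) = (n:ℝ) - 1 := by
          rw [Nat.cast_sub hn1]; simp
        rw [h7]
        nlinarith [aa_pos (n-1)]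
      have := aa_pos n
      nlinarith

lemma cast_sub' {n k : ℕ} (h : k ≤ n) : ((n-k:ℕ):ℝ) = (n:ℝ) - (k:ℝ) := by
  rw [Nat.cast_sub h]

lemma Id0 (b c : ℕ → ℝ) (H1 : ∀ n, 1 ≤ n → aa n = ∑ k ∈ Icc 1 n, b k * aa (n-k)) (Hbc : ∀ n, 1 ≤ n → b (n+1) = 2*(n:ℝ) * c n) (n : ℕ) (hn : 1 ≤ n) :
    (n:ℝ) * (c n - aa n) = - ∑ k ∈ Icc 1 (n-1), ((n:ℝ)-(k:ℝ)) * (b k * aa (n-k)) := by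
  have hbn1 : b (n+1) = 2*(n:ℝ)*c n := Hbc n hn
  have heq := H1split b H1 (n+1) (by omega)
  simp only [Nat.add_sub_cancel] at heq
  -- rewrite aa (n+1-k) for k in Icc 1 n
  have hsum1 : ∑ k ∈ Icc 1 n, b k * aa (n+1-k)
      = 2 * (∑ k ∈ Icc 1 n, ((n:ℝ)-(k:ℝ)) * (b k * aa (n-k)))
        + ∑ k ∈ Icc 1 n, b k * aa (n-k) := by
    rw [Finset.mul_sum, ← Finset.sum_add_distrib]
    apply Finset.sum_congr rfl
    intro k hk
    simp only [Finset.mem_Icc] at hk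
    have h1 : n+1-k = (n-k)+1 := by omega
    rw [h1, aa_succ]
    rw [cast_sub' hk.2]
    ring
  have hsum2 : ∑ k ∈ Icc 1 n, ((n:ℝ)-(k:ℝ)) * (b k * aa (n-k))
      = ∑ k ∈ Icc 1 (n-1), ((n:ℝ)-(k:ℝ)) * (b k * aa (n-k)) := by
    have h2 : n = (n-1)+1 := by omega
    conv_lhs => rw [h2, Finset.sum_Icc_succ_top (by omega)]
    rw [← h2]
    simp
  have hH1 := H1 n hn
  have haan1 : aa (n+1) = (2*(n:ℝ)+1) * aa n := aa_succ n
  rw [hbn1, haan1, hsum1, hsum2, ← hH1] at heq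
  linarith

def Err (b c : ℕ → ℝ) (r n : ℕ) : ℝ := c n - aa n + ∑ k ∈ Icc 1 r, b k * aa (n-k)

lemma IdR (b c : ℕ → ℝ) (H1 : ∀ n, 1 ≤ n → aa n = ∑ k ∈ Icc 1 n, b k * aa (n-k)) (Hbc : ∀ n, 1 ≤ n → b (n+1) = 2*(n:ℝ) * c n) (r n : ℕ) (hn : r + 1 ≤ n) :
    (n:ℝ) * Err b c r n = (∑ k ∈ Icc 1 r, (k:ℝ) * (b k * aa (n-k)))
      - ∑ k ∈ Icc (r+1) (n-1), ((n:ℝ)-(k:ℝ)) * (b k * aa (n-k)) := by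
  have h0 := Id0 b c H1 Hbc n (by omega)
  have hsplit : ∑ k ∈ Icc 1 (n-1), ((n:ℝ)-(k:ℝ)) * (b k * aa (n-k))
      = (∑ k ∈ Icc 1 r, ((n:ℝ)-(k:ℝ)) * (b k * aa (n-k)))
        + ∑ k ∈ Icc (r+1) (n-1), ((n:ℝ)-(k:ℝ)) * (b k * aa (n-k)) := by
    rw [show Finset.Icc 1 r = Finset.Ioc 0 r by rw [← Finset.Icc_add_one_left_eq_Ioc]; rfl,
        show Finset.Icc (r+1) (n-1) = Finset.Ioc r (n-1) by rw [← Finset.Icc_add_one_left_eq_Ioc],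
        show Finset.Icc 1 (n-1) = Finset.Ioc 0 (n-1) by rw [← Finset.Icc_add_one_left_eq_Ioc]; rfl]
    rw [← Finset.sum_Ioc_consecutive _ (by omega : 0 ≤ r) (by omega : r ≤ n-1)]
  have hcomb : (n:ℝ) * (∑ k ∈ Icc 1 r, b k * aa (n-k))
      - ∑ k ∈ Icc 1 r, ((n:ℝ)-(k:ℝ)) * (b k * aa (n-k))
      = ∑ k ∈ Icc 1 r, (k:ℝ) * (b k * aa (n-k)) := by
    rw [Finset.mul_sum, ← Finset.sum_sub_distrib]
    apply Finset.sum_congr rfl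
    intro k _; ring
  unfold Err
  rw [mul_add, h0, hsplit]
  linarith [hcomb]

lemma dsum (b : ℕ → ℝ) (r' m : ℕ) :
    ∑ k ∈ range (r'+1), dd b k * aa (m-k)
      = aa m - ∑ k ∈ Icc 1 r', b k * aa (m-k) := by
  rw [Finset.sum_range_succ']
  have h1 : ∑ k ∈ range r', dd b (k+1) * aa (m-(k+1))
      = - ∑ k ∈ Icc 1 r', b k * aa (m-k) := by
    rw [show Finset.Icc 1 r' = Finset.Ico 1 (r'+1) by rw [Finset.Ico_add_one_right_eq_Icc],
      Finset.sum_Ico_eq_sum_range]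
    simp only [Nat.add_sub_cancel]
    rw [← Finset.sum_neg_distrib]
    apply Finset.sum_congr rfl
    intro k _
    have : dd b (k+1) = - b (k+1) := by simp [dd]
    rw [this, Nat.add_comm 1 k]
    ring
  rw [h1]
  simp [dd, aa_zero]
  ring

lemma Qexp (b : ℕ → ℝ) (r' m : ℕ) (hm : r' + 1 ≤ m) :
    ∑ k ∈ range (r'+1), ee b k * aa (m+1-k)
      = 2*(m:ℝ) * (∑ k ∈ range (r'+1), dd b k * aa (m-k))
        - (2*(r':ℝ)-1) * dd b r' * aa (m-r') := by
  induction r' with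
  | zero =>
    rw [show (0:ℕ)+1 = 1 from rfl]
    simp only [range_one, Finset.sum_singleton, Nat.sub_zero]
    rw [show ee b 0 = 1 from rfl, show dd b 0 = 1 by simp [dd], aa_succ]
    push_cast
    ring
  | succ t ih =>
    have ht : t + 1 ≤ m := by omega
    have hR : ∑ k ∈ range (t+1+1), dd b k * aa (m-k)
        = (∑ k ∈ range (t+1), dd b k * aa (m-k)) + dd b (t+1) * aa (m-(t+1)) :=
      Finset.sum_range_succ _ _
    rw [Finset.sum_range_succ, ih ht, hR]
    have h1 : m+1-(t+1) = m - t := by omega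
    have h2 : m - t = (m-(t+1))+1 := by omega
    have h3 : aa (m-t) = (2*((m-(t+1):ℕ):ℝ)+1) * aa (m-(t+1)) := by
      conv_lhs => rw [h2]
      rw [aa_succ]
    have h4 : ((m-(t+1):ℕ):ℝ) = (m:ℝ) - (t:ℝ) - 1 := by
      rw [cast_sub' (by omega)]; push_cast; ring
    rw [h1]
    rw [show ee b (t+1) = dd b (t+1) + (2*(t:ℝ)-1) * dd b t from rfl]
    rw [h3, h4]
    push_cast
    ring

lemma Qlem (b c : ℕ → ℝ) (H1 : ∀ n, 1 ≤ n → aa n = ∑ k ∈ Icc 1 n, b k * aa (n-k)) (Hbc : ∀ n, 1 ≤ n → b (n+1) = 2*(n:ℝ) * c n) (r' : ℕ) (M : ℝ) (N : ℕ) (hM : 0 < M)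
    (hP : ∀ n, N ≤ n → |Err b c r' n| ≤ M * aa (n-(r'+1))) :
    ∃ (M2 : ℝ) (N2 : ℕ), 0 < M2 ∧ ∀ n, N2 ≤ n →
      |b n - ∑ k ∈ range (r'+1), ee b k * aa (n-k)| ≤ M2 * aa (n-(r'+1)) := by
  refine ⟨2*M + |2*(r':ℝ)-1| * |dd b r'| + 1, max (N+1) (2*r'+4), ?_, ?_⟩
  · positivity
  intro n hn
  set m := n - 1 with hm
  have hnm : n = m + 1 := by omega
  have hmN : N ≤ m := by omega
  have hm1 : 1 ≤ m := by omega
  have hmr : 2*r' + 3 ≤ m := by omega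
  have hbn : b n = 2*(m:ℝ) * c m := by rw [hnm]; exact Hbc m hm1
  have hqe := Qexp b r' m (by omega)
  have hds := dsum b r' m
  have hkey : b n - ∑ k ∈ range (r'+1), ee b k * aa (n-k)
      = 2*(m:ℝ) * Err b c r' m + (2*(r':ℝ)-1) * dd b r' * aa (m-r') := by
    have hsub : ∀ k, n - k = m + 1 - k := by intro k; omega
    have hss : ∑ k ∈ range (r'+1), ee b k * aa (n-k)
        = ∑ k ∈ range (r'+1), ee b k * aa (m+1-k) := by
      apply Finset.sum_congr rfl; intro k _; rw [hsub k]
    rw [hbn, hss, hqe, hds]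
    unfold Err
    ring
  rw [hkey]
  have h1 : |2*(m:ℝ) * Err b c r' m| ≤ 2*(m:ℝ) * (M * aa (m-(r'+1))) := by
    rw [abs_mul]
    have : |2*(m:ℝ)| = 2*(m:ℝ) := abs_of_nonneg (by positivity)
    rw [this]
    have := hP m hmN
    have hmpos : (0:ℝ) ≤ 2*(m:ℝ) := by positivity
    exact mul_le_mul_of_nonneg_left this hmpos
  have h2 : 2*(m:ℝ) * aa (m-(r'+1)) ≤ 2 * aa (m-r') := by
    have he : m - r' = (m-(r'+1)) + 1 := by omega
    have haeq : aa (m-r') = (2*((m-(r'+1):ℕ):ℝ)+1) * aa (m-(r'+1)) := by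
      conv_lhs => rw [he]
      rw [aa_succ]
    rw [haeq]
    have hc : (m:ℝ) ≤ 2*((m-(r'+1):ℕ):ℝ)+1 := by
      have : m ≤ 2*(m-(r'+1))+1 := by omega
      exact_mod_cast this
    nlinarith [aa_pos (m-(r'+1))]
  have h3 : |(2*(r':ℝ)-1) * dd b r' * aa (m-r')| ≤ |2*(r':ℝ)-1| * |dd b r'| * aa (m-r') := by
    rw [abs_mul, abs_mul, abs_of_pos (aa_pos (m-r'))]
  have hnr : n - (r'+1) = m - r' := by omega
  rw [hnr]
  calc |2*(m:ℝ) * Err b c r' m + (2*(r':ℝ)-1) * dd b r' * aa (m-r')|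
      ≤ |2*(m:ℝ) * Err b c r' m| + |(2*(r':ℝ)-1) * dd b r' * aa (m-r')| := abs_add_le _ _
    _ ≤ 2*(m:ℝ) * (M * aa (m-(r'+1))) + |2*(r':ℝ)-1| * |dd b r'| * aa (m-r') := by
        gcongr
    _ ≤ (2*M + |2*(r':ℝ)-1| * |dd b r'| + 1) * aa (m-r') := by
        have h4 : 2*(m:ℝ) * (M * aa (m-(r'+1))) ≤ M * (2 * aa (m-r')) := by
          have hM' := hM.le
          calc 2*(m:ℝ) * (M * aa (m-(r'+1))) = M * (2*(m:ℝ) * aa (m-(r'+1))) := by ring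
            _ ≤ M * (2 * aa (m-r')) := mul_le_mul_of_nonneg_left h2 hM'
        nlinarith [aa_pos (m-r')]

theorem Pall (b c : ℕ → ℝ) (H1 : ∀ n, 1 ≤ n → aa n = ∑ k ∈ Icc 1 n, b k * aa (n-k)) (Hbc : ∀ n, 1 ≤ n → b (n+1) = 2*(n:ℝ) * c n) (NIh : ∀ i : ℕ, 1 ≤ i → (i:ℝ) * b i = ∑ j ∈ Icc 1 i, (j:ℝ) * aa j * ee b (i-j)) : ∀ r : ℕ, ∃ (M : ℝ) (N : ℕ), 0 < M ∧ ∀ n, N ≤ n →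
    |Err b c r n| ≤ M * aa (n-(r+1)) := by
  intro r
  induction r using Nat.strong_induction_on with
  | _ r ihr =>
  obtain ⟨K, hK1, hK⟩ := bK b H1
  have hQ : ∀ j : ℕ, ∃ (M2 : ℝ) (N2 : ℕ), 0 ≤ M2 ∧ ((1 ≤ j ∧ j ≤ r) → ∀ n, N2 ≤ n →
      |b n - ∑ k ∈ range (r-j+1), ee b k * aa (n-k)| ≤ M2 * aa (n-(r-j+1))) := by
    intro j
    by_cases hj : 1 ≤ j ∧ j ≤ r
    · obtain ⟨M, N, hMpos, hP⟩ := ihr (r-j) (by omega)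
      obtain ⟨M2, N2, hM2pos, h2⟩ := Qlem b c H1 Hbc (r-j) M N hMpos hP
      exact ⟨M2, N2, hM2pos.le, fun _ => h2⟩
    · exact ⟨0, 0, le_rfl, fun h => absurd h hj⟩
  choose MQ NQ hMQ0 hMQ using hQ
  set Mr : ℝ := 2*aa (r+1) + 2*aa (r+2) with hMrdef
  have hMrpos : 0 < Mr := by have := aa_pos (r+1); have := aa_pos (r+2); positivity
  set C2 : ℝ := ∑ j ∈ Icc 1 r, (j:ℝ) * aa j * MQ j with hC2def
  have hC2nn : 0 ≤ C2 := by
    apply Finset.sum_nonneg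
    intro j hj
    simp only [Finset.mem_Icc] at hj
    have := aa_pos j
    have := hMQ0 j
    positivity
  refine ⟨K * Mr + C2 + 1, (Finset.range (r+1)).sup NQ + 2*r + 4, ?_, ?_⟩
  · nlinarith
  intro n hn
  have hnr : 2*r + 4 ≤ n := by omega
  have hNQ : ∀ j, j ≤ r → NQ j ≤ n - j := by
    intro j hj
    have : NQ j ≤ (Finset.range (r+1)).sup NQ :=
      Finset.le_sup (Finset.mem_range.mpr (by omega))
    omega
  -- the master identity
  have hid := IdR b c H1 Hbc r n (by omega)
  -- split the long sum
  have hsplit : ∑ k ∈ Icc (r+1) (n-1), ((n:ℝ)-(k:ℝ)) * (b k * aa (n-k))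
      = (∑ k ∈ Icc (r+1) (n-(r+1)), ((n:ℝ)-(k:ℝ)) * (b k * aa (n-k)))
        + ∑ k ∈ Icc (n-r) (n-1), ((n:ℝ)-(k:ℝ)) * (b k * aa (n-k)) := by
    rw [show Finset.Icc (r+1) (n-1) = Finset.Ioc r (n-1) by rw [← Finset.Icc_add_one_left_eq_Ioc],
        show Finset.Icc (r+1) (n-(r+1)) = Finset.Ioc r (n-(r+1)) by rw [← Finset.Icc_add_one_left_eq_Ioc],
        show Finset.Icc (n-r) (n-1) = Finset.Ioc (n-(r+1)) (n-1) by
          rw [← Finset.Icc_add_one_left_eq_Ioc]; congr 1; omega]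
    rw [← Finset.sum_Ioc_consecutive _ (by omega : r ≤ n-(r+1)) (by omega : n-(r+1) ≤ n-1)]
  -- middle bound
  have hmid : |∑ k ∈ Icc (r+1) (n-(r+1)), ((n:ℝ)-(k:ℝ)) * (b k * aa (n-k))|
      ≤ (n:ℝ) * (K * (Mr * aa (n-(r+1)))) := by
    calc |∑ k ∈ Icc (r+1) (n-(r+1)), ((n:ℝ)-(k:ℝ)) * (b k * aa (n-k))|
        ≤ ∑ k ∈ Icc (r+1) (n-(r+1)), |((n:ℝ)-(k:ℝ)) * (b k * aa (n-k))| :=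
          Finset.abs_sum_le_sum_abs _ _
      _ ≤ ∑ k ∈ Icc (r+1) (n-(r+1)), (n:ℝ) * K * (aa k * aa (n-k)) := by
          apply Finset.sum_le_sum
          intro k hk
          simp only [Finset.mem_Icc] at hk
          have hkn : (k:ℝ) ≤ (n:ℝ) := by exact_mod_cast (by omega : k ≤ n)
          have hk0 : (0:ℝ) ≤ (k:ℝ) := by positivity
          rw [abs_mul, abs_mul, abs_of_pos (aa_pos (n-k))]
          have h5 : |(n:ℝ)-(k:ℝ)| ≤ (n:ℝ) := by rw [abs_of_nonneg (by linarith)]; linarith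
          have h6 : |b k| ≤ K * aa k := hK k
          have hak := aa_pos k; have hank := aa_pos (n-k)
          calc |(n:ℝ)-(k:ℝ)| * (|b k| * aa (n-k))
              ≤ (n:ℝ) * (|b k| * aa (n-k)) :=
                mul_le_mul_of_nonneg_right h5 (by positivity)
            _ ≤ (n:ℝ) * ((K * aa k) * aa (n-k)) := by
                apply mul_le_mul_of_nonneg_left _ (by positivity)
                exact mul_le_mul_of_nonneg_right h6 hank.le
            _ = (n:ℝ) * K * (aa k * aa (n-k)) := by ring
      _ = (n:ℝ) * K * ∑ k ∈ Icc (r+1) (n-(r+1)), aa k * aa (n-k) := by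
          rw [Finset.mul_sum]
      _ ≤ (n:ℝ) * (K * (Mr * aa (n-(r+1)))) := by
          have hsb := sum_bound (r+1) (by omega) n
          have h7 : aa (r+2) = aa (r+1+1) := rfl
          have h8 : ∑ k ∈ Icc (r+1) (n-(r+1)), aa k * aa (n-k) ≤ Mr * aa (n-(r+1)) := by
            rw [hMrdef]; rw [h7]; exact hsb
          have hn0 : (0:ℝ) ≤ (n:ℝ) := by positivity
          have hK0 : (0:ℝ) ≤ K := by linarith
          calc (n:ℝ) * K * ∑ k ∈ Icc (r+1) (n-(r+1)), aa k * aa (n-k)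
              ≤ (n:ℝ) * K * (Mr * aa (n-(r+1))) := by
                apply mul_le_mul_of_nonneg_left h8 (by positivity)
            _ = (n:ℝ) * (K * (Mr * aa (n-(r+1)))) := by ring
  -- tail reindexed
  have htail : ∑ k ∈ Icc (n-r) (n-1), ((n:ℝ)-(k:ℝ)) * (b k * aa (n-k))
      = ∑ j ∈ Icc 1 r, (j:ℝ) * (b (n-j) * aa j) := by
    apply Finset.sum_nbij' (fun k => n - k) (fun j => n - j)
    · intro k hk; simp only [Finset.mem_Icc] at *; omega
    · intro j hj; simp only [Finset.mem_Icc] at *; omega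
    · intro k hk; simp only [Finset.mem_Icc] at hk; omega
    · intro j hj; simp only [Finset.mem_Icc] at hj; omega
    · intro k hk
      simp only [Finset.mem_Icc] at hk
      have h9 : n - (n - k) = k := by omega
      have h10 : ((n-k:ℕ):ℝ) = (n:ℝ) - (k:ℝ) := cast_sub' (by omega)
      rw [h9, h10]
  -- expansion of b (n-j)
  have hbexp : ∀ j ∈ Icc 1 r,
      |b (n-j) - ∑ k ∈ range (r-j+1), ee b k * aa (n-j-k)| ≤ MQ j * aa (n-(r+1)) := by
    intro j hj
    simp only [Finset.mem_Icc] at hj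
    have h11 := hMQ j ⟨hj.1, hj.2⟩ (n-j) (hNQ j hj.2)
    have h12 : (n-j) - (r-j+1) = n-(r+1) := by omega
    rwa [h12] at h11
  -- split tail into main expansion + error
  have htail2 : ∑ j ∈ Icc 1 r, (j:ℝ) * (b (n-j) * aa j)
      = (∑ j ∈ Icc 1 r, ∑ k ∈ range (r-j+1), (j:ℝ) * aa j * (ee b k * aa (n-j-k)))
        + ∑ j ∈ Icc 1 r, (j:ℝ) * aa j *
            (b (n-j) - ∑ k ∈ range (r-j+1), ee b k * aa (n-j-k)) := by
    rw [← Finset.sum_add_distrib]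
    apply Finset.sum_congr rfl
    intro j _
    rw [← Finset.mul_sum]
    ring
  have hE2 : |∑ j ∈ Icc 1 r, (j:ℝ) * aa j *
      (b (n-j) - ∑ k ∈ range (r-j+1), ee b k * aa (n-j-k))| ≤ C2 * aa (n-(r+1)) := by
    calc |∑ j ∈ Icc 1 r, (j:ℝ) * aa j *
            (b (n-j) - ∑ k ∈ range (r-j+1), ee b k * aa (n-j-k))|
        ≤ ∑ j ∈ Icc 1 r, |(j:ℝ) * aa j *
            (b (n-j) - ∑ k ∈ range (r-j+1), ee b k * aa (n-j-k))| :=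
          Finset.abs_sum_le_sum_abs _ _
      _ ≤ ∑ j ∈ Icc 1 r, (j:ℝ) * aa j * MQ j * aa (n-(r+1)) := by
          apply Finset.sum_le_sum
          intro j hj
          have hja := aa_pos j
          have hjnn : (0:ℝ) ≤ (j:ℝ) := by positivity
          rw [abs_mul]
          have ha1 : |(j:ℝ) * aa j| = (j:ℝ) * aa j := abs_of_nonneg (by positivity)
          rw [ha1]
          calc (j:ℝ) * aa j * |b (n-j) - ∑ k ∈ range (r-j+1), ee b k * aa (n-j-k)|
              ≤ (j:ℝ) * aa j * (MQ j * aa (n-(r+1))) :=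
                mul_le_mul_of_nonneg_left (hbexp j hj) (by positivity)
            _ = (j:ℝ) * aa j * MQ j * aa (n-(r+1)) := by ring
      _ = C2 * aa (n-(r+1)) := by rw [hC2def, Finset.sum_mul]
  -- the double sum equals the first sum via NI
  have hinner : ∀ j ∈ Icc 1 r,
      ∑ k ∈ range (r-j+1), (j:ℝ) * aa j * (ee b k * aa (n-j-k))
        = ∑ i ∈ Icc j r, (j:ℝ) * aa j * (ee b (i-j) * aa (n-i)) := by
    intro j hj
    simp only [Finset.mem_Icc] at hj
    apply Finset.sum_nbij' (fun k => j+k) (fun i => i-j)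
    · intro k hk; simp only [Finset.mem_range] at hk; simp only [Finset.mem_Icc]; omega
    · intro i hi; simp only [Finset.mem_Icc] at hi; simp only [Finset.mem_range]; omega
    · intro k hk; simp only [Finset.mem_range] at hk; omega
    · intro i hi; simp only [Finset.mem_Icc] at hi; omega
    · intro k hk
      simp only [Finset.mem_range] at hk
      have e1 : (j+k)-j = k := by omega
      have e2 : n-j-k = n-(j+k) := by omega
      rw [e1, e2]
  have hDS : ∑ j ∈ Icc 1 r, ∑ k ∈ range (r-j+1), (j:ℝ) * aa j * (ee b k * aa (n-j-k))
      = ∑ i ∈ Icc 1 r, (i:ℝ) * b i * aa (n-i) := by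
    rw [Finset.sum_congr rfl hinner]
    have hIcc1 : Finset.Icc 1 r = Finset.Ico 1 (r+1) := (Finset.Ico_add_one_right_eq_Icc 1 r).symm
    have hIccj : ∀ j : ℕ, Finset.Icc j r = Finset.Ico j (r+1) :=
      fun j => (Finset.Ico_add_one_right_eq_Icc j r).symm
    calc ∑ j ∈ Icc 1 r, ∑ i ∈ Icc j r, (j:ℝ) * aa j * (ee b (i-j) * aa (n-i))
        = ∑ j ∈ Finset.Ico 1 (r+1), ∑ i ∈ Finset.Ico j (r+1),
            (j:ℝ) * aa j * (ee b (i-j) * aa (n-i)) := by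
          rw [← hIcc1]
          apply Finset.sum_congr rfl
          intro j _
          rw [← hIccj j]
      _ = ∑ i ∈ Finset.Ico 1 (r+1), ∑ j ∈ Finset.Ico 1 (i+1),
            (j:ℝ) * aa j * (ee b (i-j) * aa (n-i)) :=
          Finset.sum_Ico_Ico_comm 1 (r+1) _
      _ = ∑ i ∈ Icc 1 r, (i:ℝ) * b i * aa (n-i) := by
          rw [← hIcc1]
          apply Finset.sum_congr rfl
          intro i hi
          simp only [Finset.mem_Icc] at hi
          have hIcci : Finset.Ico 1 (i+1) = Finset.Icc 1 i := Finset.Ico_add_one_right_eq_Icc 1 i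
          rw [hIcci]
          have hni := NIh i hi.1
          calc ∑ j ∈ Icc 1 i, (j:ℝ) * aa j * (ee b (i-j) * aa (n-i))
              = (∑ j ∈ Icc 1 i, (j:ℝ) * aa j * ee b (i-j)) * aa (n-i) := by
                rw [Finset.sum_mul]
                apply Finset.sum_congr rfl
                intro j _
                ring
            _ = (i:ℝ) * b i * aa (n-i) := by rw [← hni]
  have hfirst : ∑ k ∈ Icc 1 r, (k:ℝ) * (b k * aa (n-k))
      = ∑ i ∈ Icc 1 r, (i:ℝ) * b i * aa (n-i) := by
    apply Finset.sum_congr rfl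
    intro k _
    ring
  -- combine
  rw [hsplit, htail, htail2, hDS, hfirst] at hid
  have hfin : (n:ℝ) * Err b c r n
      = - (∑ k ∈ Icc (r+1) (n-(r+1)), ((n:ℝ)-(k:ℝ)) * (b k * aa (n-k)))
        - ∑ j ∈ Icc 1 r, (j:ℝ) * aa j *
            (b (n-j) - ∑ k ∈ range (r-j+1), ee b k * aa (n-j-k)) := by
    linarith [hid]
  have hnpos : (0:ℝ) < (n:ℝ) := by
    have : 0 < n := by omega
    exact_mod_cast this
  have habs : (n:ℝ) * |Err b c r n| ≤ (n:ℝ) * ((K * Mr + C2 + 1) * aa (n-(r+1))) := by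
    have h20 : (n:ℝ) * |Err b c r n| = |(n:ℝ) * Err b c r n| := by
      rw [abs_mul, abs_of_pos hnpos]
    rw [h20, hfin]
    have haP := aa_pos (n-(r+1))
    calc |- (∑ k ∈ Icc (r+1) (n-(r+1)), ((n:ℝ)-(k:ℝ)) * (b k * aa (n-k)))
        - ∑ j ∈ Icc 1 r, (j:ℝ) * aa j *
            (b (n-j) - ∑ k ∈ range (r-j+1), ee b k * aa (n-j-k))|
        ≤ |∑ k ∈ Icc (r+1) (n-(r+1)), ((n:ℝ)-(k:ℝ)) * (b k * aa (n-k))|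
          + |∑ j ∈ Icc 1 r, (j:ℝ) * aa j *
            (b (n-j) - ∑ k ∈ range (r-j+1), ee b k * aa (n-j-k))| := by
          refine le_trans (abs_sub _ _) ?_
          rw [abs_neg]
      _ ≤ (n:ℝ) * (K * (Mr * aa (n-(r+1)))) + C2 * aa (n-(r+1)) := by
          gcongr
      _ ≤ (n:ℝ) * ((K * Mr + C2 + 1) * aa (n-(r+1))) := by
          have hn1 : (1:ℝ) ≤ (n:ℝ) := by exact_mod_cast (by omega : 1 ≤ n)
          have h21 : C2 * aa (n-(r+1)) ≤ (n:ℝ) * ((C2+1) * aa (n-(r+1))) := by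
            have h22 : C2 + 1 ≤ (n:ℝ) * (C2+1) := by nlinarith
            nlinarith
          nlinarith [h21]
  have := le_of_mul_le_mul_left habs hnpos
  linarith [this]

end
end CMaux

section MainThm
open PowerSeries

/-- asymptotic probability that a random combinatorial map of size `2n`
is connected.  Here `(2n-1)!!` is `Nat.doubleFactorial (2*n - 1)` (so `(-1)!! = 1`). -/
theorem combinatorial_map_connected
    (ccm im : ℕ → ℝ) (hccm0 : ccm 0 = 0)
    (hccmodd : ∀ m, ¬ 2 ∣ m → ccm m = 0) (him0 : im 0 = 0)
    (hexp : (PowerSeries.mk fun m =>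
        if 2 ∣ m then (Nat.doubleFactorial (2 * (m / 2) - 1) : ℝ) else 0) =
      expPS (PowerSeries.mk fun m => ccm m / (Nat.factorial m)))
    (him : (PowerSeries.mk fun k => im (2 * k)) =
      1 - (PowerSeries.mk fun n => (Nat.doubleFactorial (2 * n - 1) : ℝ))⁻¹) :
    ∀ r : ℕ,
      (fun n => ccm (2 * n) /
            ((Nat.factorial (2 * n) : ℝ) * (Nat.doubleFactorial (2 * n - 1) : ℝ)) -
          (1 - ∑ k ∈ Finset.Icc 1 r,
            im (2 * k) * (Nat.doubleFactorial (2 * (n - k) - 1) : ℝ) /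
              (Nat.doubleFactorial (2 * n - 1) : ℝ)))
        =O[atTop] fun n =>
          (Nat.doubleFactorial (2 * (n - (r + 1)) - 1) : ℝ) /
            (Nat.doubleFactorial (2 * n - 1) : ℝ) := by
  intro r
  have hb0 : (fun k => im (2*k)) 0 = 0 := by simpa using him0
  have hffc : PowerSeries.constantCoeff CMaux.ff ≠ 0 := by
    have h : PowerSeries.constantCoeff CMaux.ff = CMaux.aa 0 := by
      rw [CMaux.ff]; simp
    rw [h, CMaux.aa_zero]
    norm_num
  have him' : CMaux.BB (fun k => im (2*k)) = 1 - CMaux.ff⁻¹ := him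
  have hufm : CMaux.ff * (1 - CMaux.BB (fun k => im (2*k))) = 1 := by
    rw [him']
    have h2 : (1:ℝ⟦X⟧) - (1 - CMaux.ff⁻¹) = CMaux.ff⁻¹ := by ring
    rw [h2]
    exact PowerSeries.mul_inv_cancel _ hffc
  have H1s := CMaux.H1_of (fun k => im (2*k)) hb0 hufm
  have hexp' : CMaux.F2 = expPS (CMaux.C2 ccm) := hexp
  have hC20 : PowerSeries.constantCoeff (CMaux.C2 ccm) = 0 := by
    have h : PowerSeries.constantCoeff (CMaux.C2 ccm)
        = ccm 0 / (Nat.factorial 0 : ℝ) := by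
      rw [CMaux.C2]; simp
    rw [h, hccm0]
    norm_num
  have hder : d⁄dX ℝ CMaux.F2 = (d⁄dX ℝ (CMaux.C2 ccm)) * CMaux.F2 := by
    rw [hexp']
    exact CMaux.expPS_deriv _ hC20
  have hdfc := CMaux.hdf ccm hccmodd hder
  have hBBc := CMaux.hBB (fun k => im (2*k)) (CMaux.cs ccm) hufm hdfc
  have Hbcs := CMaux.Hbc_of (fun k => im (2*k)) (CMaux.cs ccm) hBBc
  have NIs := CMaux.NI (fun k => im (2*k)) hb0 hufm
  obtain ⟨M, N, hM, hP⟩ := CMaux.Pall (fun k => im (2*k)) (CMaux.cs ccm) H1s Hbcs NIs r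
  rw [Asymptotics.isBigO_iff]
  refine ⟨M, ?_⟩
  rw [Filter.eventually_atTop]
  refine ⟨N, fun n hn => ?_⟩
  have hEb := hP n hn
  have haan : CMaux.aa n ≠ 0 := ne_of_gt (CMaux.aa_pos n)
  have heq : ccm (2 * n) / ((Nat.factorial (2 * n) : ℝ) * (Nat.doubleFactorial (2 * n - 1) : ℝ))
      - (1 - ∑ k ∈ Finset.Icc 1 r,
          im (2 * k) * (Nat.doubleFactorial (2 * (n - k) - 1) : ℝ) /
            (Nat.doubleFactorial (2 * n - 1) : ℝ))
      = CMaux.Err (fun k => im (2*k)) (CMaux.cs ccm) r n / CMaux.aa n := by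
    have heq2 : CMaux.Err (fun k => im (2*k)) (CMaux.cs ccm) r n / CMaux.aa n
        = CMaux.cs ccm n / CMaux.aa n - 1
          + ∑ k ∈ Finset.Icc 1 r, (im (2*k) * CMaux.aa (n-k)) / CMaux.aa n := by
      unfold CMaux.Err
      rw [add_div, sub_div, div_self haan, Finset.sum_div]
    rw [heq2]
    have h4 : CMaux.cs ccm n / CMaux.aa n
        = ccm (2*n) / ((Nat.factorial (2*n):ℝ) * CMaux.aa n) := by
      unfold CMaux.cs
      rw [div_div]
    rw [h4]
    unfold CMaux.aa
    ring
  show ‖_‖ ≤ M * ‖_‖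
  rw [Real.norm_eq_abs, Real.norm_eq_abs, heq]
  have h3 : (Nat.doubleFactorial (2 * (n - (r + 1)) - 1) : ℝ) /
      (Nat.doubleFactorial (2 * n - 1) : ℝ) = CMaux.aa (n-(r+1)) / CMaux.aa n := rfl
  rw [h3, abs_div, abs_div, abs_of_pos (CMaux.aa_pos n),
    abs_of_pos (CMaux.aa_pos (n-(r+1)))]
  rw [show M * (CMaux.aa (n-(r+1)) / CMaux.aa n) = (M * CMaux.aa (n-(r+1))) / CMaux.aa n by ring]
  exact (div_le_div_iff_of_pos_right (CMaux.aa_pos n)).mpr hEb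

end MainThm
end
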